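/- arXiv:0710.5571 — 5 statements merged into one kernel-verified Lean document; each statement's English description precedes it below -/
import Mathlib

section
/- If an edge-coloring of the complete graph K_n satisfies d_i(x) ≤ δn for every vertex x and every color i, then the number of copies of K_t whose C(t,2) edges do not all receive distinct colors is at most (5/8)·δ·t^4·C(n,t). -/
open Finset

/-- The set of colors appearing on the edges inside a vertex set `S`. -/
def colorsOn {V C : Type*} [DecidableEq V] [DecidableEq C]
    (c : Sym2 V → C) (S : Finset V) : Finset C :=
  S.offDiag.image fun p => c s(p.1, p.2)

/-- The edges inside `S` receive pairwise distinct colors (a rainbow copy of `K_{|S|}`). -/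
def IsRainbow {V C : Type*} (c : Sym2 V → C) (S : Finset V) : Prop :=
  ∀ a ∈ S, ∀ b ∈ S, ∀ x ∈ S, ∀ y ∈ S,
    a ≠ b → x ≠ y → s(a, b) ≠ s(x, y) → c s(a, b) ≠ c s(x, y)

/-- All edges inside `S` receive the same color (a monochromatic copy of `K_{|S|}`). -/
def IsMonochromatic {V C : Type*} (c : Sym2 V → C) (S : Finset V) : Prop :=
  ∀ a ∈ S, ∀ b ∈ S, ∀ x ∈ S, ∀ y ∈ S, a ≠ b → x ≠ y → c s(a, b) = c s(x, y)

/-- All edges inside `S` receive the color `i`. -/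
def IsMonoInColor {V C : Type*} (c : Sym2 V → C) (i : C) (S : Finset V) : Prop :=
  ∀ a ∈ S, ∀ b ∈ S, a ≠ b → c s(a, b) = i

/-- `colorDeg c i x` is the degree `d_i(x)` of the vertex `x` in color `i`. -/
def colorDeg {V C : Type*} [Fintype V] [DecidableEq V] [DecidableEq C]
    (c : Sym2 V → C) (i : C) (x : V) : ℕ :=
  (univ.filter fun y => y ≠ x ∧ c s(x, y) = i).card

instance {V C : Type*} [DecidableEq V] [DecidableEq C] (c : Sym2 V → C) (S : Finset V) :
    Decidable (IsRainbow c S) := by unfold IsRainbow; infer_instance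

instance {V C : Type*} [DecidableEq V] [DecidableEq C] (c : Sym2 V → C) (S : Finset V) :
    Decidable (IsMonochromatic c S) := by unfold IsMonochromatic; infer_instance

instance {V C : Type*} [DecidableEq V] [DecidableEq C] (c : Sym2 V → C) (i : C) (S : Finset V) :
    Decidable (IsMonoInColor c i S) := by unfold IsMonoInColor; infer_instance

/-- There is a `k`-edge-coloring of `K_n` with no rainbow `K_t` in which every `K_4`
receives at least three colors (the colorings counted by `g(k,t)`). -/
def GoodColoring (k t n : ℕ) : Prop :=
  ∃ c : Sym2 (Fin n) → Fin k,
    (∀ S : Finset (Fin n), S.card = t → ¬ IsRainbow c S) ∧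
    (∀ S : Finset (Fin n), S.card = 4 → 3 ≤ (colorsOn c S).card)

lemma card_supersets {α : Type*} [Fintype α] [DecidableEq α] (Q : Finset α) {t : ℕ}
    (hkt : Q.card ≤ t) :
    (((univ : Finset α).powersetCard t).filter fun S => Q ⊆ S).card
      = (Fintype.card α - Q.card).choose (t - Q.card) := by
  have hc : Qᶜ.card = Fintype.card α - Q.card := by
    rw [Finset.card_compl]
  rw [← hc, ← Finset.card_powersetCard (t - Q.card) Qᶜ]
  apply Finset.card_bij' (fun S _ => S \ Q) (fun T _ => T ∪ Q)
  · intro S hS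
    simp only [mem_filter, Finset.mem_powersetCard] at hS ⊢
    obtain ⟨⟨-, hcard⟩, hQS⟩ := hS
    constructor
    · intro x hx
      simp only [Finset.mem_sdiff] at hx
      simp [Finset.mem_compl, hx.2]
    · rw [Finset.card_sdiff_of_subset hQS, hcard]
  · intro T hT
    simp only [Finset.mem_powersetCard] at hT
    obtain ⟨hTQ, hcard⟩ := hT
    have hdisj : Disjoint T Q := by
      rw [Finset.disjoint_left]
      intro a haT haQ
      have := hTQ haT
      simp [Finset.mem_compl, haQ] at this
    simp only [mem_filter, Finset.mem_powersetCard]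
    refine ⟨⟨Finset.subset_univ _, ?_⟩, Finset.subset_union_right⟩
    rw [Finset.card_union_of_disjoint hdisj, hcard]
    omega
  · intro S hS
    simp only [mem_filter] at hS
    exact Finset.sdiff_union_of_subset hS.2
  · intro T hT
    simp only [Finset.mem_powersetCard] at hT
    apply Finset.union_sdiff_cancel_right
    rw [Finset.disjoint_right]
    intro a haQ haT
    have := hT.1 haT
    simp [Finset.mem_compl, haQ] at this

lemma choose_step {n t : ℕ} (h1 : 1 ≤ t) (h2 : t ≤ n) :
    n * (n - 1).choose (t - 1) = t * n.choose t := by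
  obtain ⟨n', rfl⟩ : ∃ n', n = n' + 1 := ⟨n - 1, by omega⟩
  obtain ⟨t', rfl⟩ : ∃ t', t = t' + 1 := ⟨t - 1, by omega⟩
  simpa [Nat.succ_sub_one, mul_comm] using Nat.add_one_mul_choose_eq n' t'

lemma choose_id3 {n t : ℕ} (h1 : 3 ≤ t) (h2 : t ≤ n) :
    n * (n - 1) * (n - 2) * (n - 3).choose (t - 3) =
      t * (t - 1) * (t - 2) * n.choose t := by
  have e1 := choose_step (n := n) (t := t) (by omega) h2
  have e2 := choose_step (n := n - 1) (t := t - 1) (by omega) (by omega)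
  have e3 := choose_step (n := n - 2) (t := t - 2) (by omega) (by omega)
  rw [show n - 1 - 1 = n - 2 by omega, show t - 1 - 1 = t - 2 by omega] at e2
  rw [show n - 2 - 1 = n - 3 by omega, show t - 2 - 1 = t - 3 by omega] at e3
  calc n * (n - 1) * (n - 2) * (n - 3).choose (t - 3)
      = n * (n - 1) * ((n - 2) * (n - 3).choose (t - 3)) := by ring
    _ = n * (n - 1) * ((t - 2) * (n - 2).choose (t - 2)) := by rw [e3]
    _ = (t - 2) * (n * ((n - 1) * (n - 2).choose (t - 2))) := by ring
    _ = (t - 2) * (n * ((t - 1) * (n - 1).choose (t - 1))) := by rw [e2]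
    _ = (t - 2) * ((t - 1) * (n * (n - 1).choose (t - 1))) := by ring
    _ = (t - 2) * ((t - 1) * (t * n.choose t)) := by rw [e1]
    _ = t * (t - 1) * (t - 2) * n.choose t := by ring

lemma choose_id4 {n t : ℕ} (h1 : 4 ≤ t) (h2 : t ≤ n) :
    n * (n - 1) * (n - 2) * (n - 3) * (n - 4).choose (t - 4) =
      t * (t - 1) * (t - 2) * (t - 3) * n.choose t := by
  have e0 := choose_id3 (n := n) (t := t) (by omega) h2
  have e3 := choose_step (n := n - 3) (t := t - 3) (by omega) (by omega)
  rw [show n - 3 - 1 = n - 4 by omega, show t - 3 - 1 = t - 4 by omega] at e3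
  calc n * (n - 1) * (n - 2) * (n - 3) * (n - 4).choose (t - 4)
      = n * (n - 1) * (n - 2) * ((n - 3) * (n - 4).choose (t - 4)) := by ring
    _ = n * (n - 1) * (n - 2) * ((t - 3) * (n - 3).choose (t - 3)) := by rw [e3]
    _ = (t - 3) * (n * (n - 1) * (n - 2) * (n - 3).choose (t - 3)) := by ring
    _ = (t - 3) * (t * (t - 1) * (t - 2) * n.choose t) := by rw [e0]
    _ = t * (t - 1) * (t - 2) * (t - 3) * n.choose t := by ring


namespace FNR

variable {n : ℕ} {C : Type*} [DecidableEq C]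

abbrev QT (n : ℕ) := (Fin n × Fin n) × (Fin n × Fin n)

def verts (q : QT n) : Finset (Fin n) := {q.1.1, q.1.2, q.2.1, q.2.2}

def Wset (c : Sym2 (Fin n) → C) : Finset (QT n) :=
  univ.filter fun q => q.1.1 ≠ q.1.2 ∧ q.2.1 ≠ q.2.2 ∧
    s(q.1.1, q.1.2) ≠ s(q.2.1, q.2.2) ∧ c s(q.1.1, q.1.2) = c s(q.2.1, q.2.2)

lemma card_le_sum_colorDeg {ι : Type*} [Fintype ι] [DecidableEq ι]
    (c : Sym2 (Fin n) → C) (T : Finset (QT n))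
    (f : QT n → ι) (v : ι → Fin n) (col : ι → C) (e : QT n → Fin n)
    (h : ∀ q ∈ T, e q ≠ v (f q) ∧ c s(v (f q), e q) = col (f q))
    (hinj : ∀ q₁ ∈ T, ∀ q₂ ∈ T, f q₁ = f q₂ → e q₁ = e q₂ → q₁ = q₂) :
    T.card ≤ ∑ x : ι, colorDeg c (col x) (v x) := by
  rw [Finset.card_eq_sum_card_fiberwise (f := f) (t := univ) (fun q _ => mem_univ _)]
  refine Finset.sum_le_sum fun x _ => ?_
  unfold colorDeg
  refine Finset.card_le_card_of_injOn e ?_ ?_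
  · intro q hq
    simp only [Finset.mem_coe, mem_filter] at hq ⊢
    obtain ⟨hqT, hfx⟩ := hq
    obtain ⟨h1, h2⟩ := h q hqT
    subst hfx
    exact ⟨mem_univ _, h1, h2⟩
  · intro q₁ h₁ q₂ h₂ hee
    simp only [Finset.coe_filter, Set.mem_setOf_eq] at h₁ h₂
    exact hinj q₁ h₁.1 q₂ h₂.1 (h₁.2.trans h₂.2.symm) hee

lemma sum_colorDeg_le_real {ι : Type*} [Fintype ι]
    (c : Sym2 (Fin n) → C) (v : ι → Fin n) (col : ι → C) (δ : ℝ)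
    (hdeg : ∀ (x : Fin n) (i : C), (colorDeg c i x : ℝ) ≤ δ * n) :
    ((∑ x : ι, colorDeg c (col x) (v x) : ℕ) : ℝ) ≤ (Fintype.card ι) * (δ * n) := by
  push_cast
  calc (∑ x : ι, (colorDeg c (col x) (v x) : ℝ))
      ≤ ∑ _x : ι, δ * n := Finset.sum_le_sum fun x _ => hdeg _ _
    _ = (Fintype.card ι) * (δ * n) := by
        rw [Finset.sum_const, nsmul_eq_mul, Finset.card_univ]

lemma Wset_card_le (c : Sym2 (Fin n) → C) (δ : ℝ)
    (hdeg : ∀ (x : Fin n) (i : C), (colorDeg c i x : ℝ) ≤ δ * n) :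
    ((Wset c).card : ℝ) ≤ n ^ 3 * (δ * n) := by
  have h := card_le_sum_colorDeg (ι := (Fin n × Fin n) × Fin n) c (Wset c)
    (fun q => (q.1, q.2.1)) (fun p => p.2) (fun p => c s(p.1.1, p.1.2)) (fun q => q.2.2)
    ?_ ?_
  · calc ((Wset c).card : ℝ)
        ≤ ((∑ x : (Fin n × Fin n) × Fin n,
            colorDeg c (c s(x.1.1, x.1.2)) x.2 : ℕ) : ℝ) := by exact_mod_cast h
      _ ≤ (Fintype.card ((Fin n × Fin n) × Fin n)) * (δ * n) :=
          sum_colorDeg_le_real c _ _ δ hdeg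
      _ = n ^ 3 * (δ * n) := by
          push_cast [Fintype.card_prod, Fintype.card_fin]
          ring
  · intro q hq
    simp only [Wset, mem_filter] at hq
    exact ⟨hq.2.2.1.symm, hq.2.2.2.2.symm⟩
  · rintro ⟨⟨a₁, b₁⟩, ⟨x₁, y₁⟩⟩ - ⟨⟨a₂, b₂⟩, ⟨x₂, y₂⟩⟩ - hf he
    simp only [Prod.mk.injEq] at hf he ⊢
    exact ⟨hf.1, hf.2, he⟩


def Pat (c : Sym2 (Fin n) → C) (k : Fin 4) : Finset (QT n) :=
  (Wset c).filter fun q =>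
    if k = 0 then q.2.1 = q.1.1
    else if k = 1 then q.2.1 = q.1.2
    else if k = 2 then q.2.2 = q.1.1
    else q.2.2 = q.1.2

lemma mem_Pat_iff {c : Sym2 (Fin n) → C} {q : QT n} {k : Fin 4} :
    q ∈ Pat c k ↔ q ∈ Wset c ∧
      (if k = 0 then q.2.1 = q.1.1
       else if k = 1 then q.2.1 = q.1.2
       else if k = 2 then q.2.2 = q.1.1
       else q.2.2 = q.1.2) := by
  simp [Pat, mem_filter]

lemma mem_Wset_iff {c : Sym2 (Fin n) → C} {q : QT n} :
    q ∈ Wset c ↔ q.1.1 ≠ q.1.2 ∧ q.2.1 ≠ q.2.2 ∧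
      s(q.1.1, q.1.2) ≠ s(q.2.1, q.2.2) ∧ c s(q.1.1, q.1.2) = c s(q.2.1, q.2.2) := by
  simp [Wset, mem_filter]

lemma Pat_card_le (c : Sym2 (Fin n) → C) (δ : ℝ) (k : Fin 4)
    (hdeg : ∀ (x : Fin n) (i : C), (colorDeg c i x : ℝ) ≤ δ * n) :
    ((Pat c k).card : ℝ) ≤ n ^ 2 * (δ * n) := by
  have key : ∃ (v : Fin n × Fin n → Fin n) (e : QT n → Fin n),
      (∀ q ∈ Pat c k, e q ≠ v q.1 ∧ c s(v q.1, e q) = c s(q.1.1, q.1.2)) ∧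
      (∀ q₁ ∈ Pat c k, ∀ q₂ ∈ Pat c k, q₁.1 = q₂.1 → e q₁ = e q₂ → q₁ = q₂) := by
    fin_cases k
    · refine ⟨fun p => p.1, fun q => q.2.2, fun q hq => ?_, ?_⟩
      · rw [mem_Pat_iff] at hq
        obtain ⟨hW, hco⟩ := hq
        simp only [Fin.isValue, reduceIte, show ((fun (i : Fin 4) => i) = id) from rfl, id_eq] at hco
        obtain ⟨hab, hxy, hss, hcol⟩ := mem_Wset_iff.mp hW
        refine ⟨?_, ?_⟩
        · show q.2.2 ≠ q.1.1
          rw [← hco]; exact hxy.symm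
        · show c s(q.1.1, q.2.2) = c s(q.1.1, q.1.2)
          have h' : c s(q.1.1, q.2.2) = c s(q.2.1, q.2.2) := by rw [hco]
          exact h'.trans hcol.symm
      · intro q₁ h₁ q₂ h₂ hf he
        rw [mem_Pat_iff] at h₁ h₂
        have hco₁ := h₁.2; have hco₂ := h₂.2
        simp only [Fin.isValue, reduceIte, show ((fun (i : Fin 4) => i) = id) from rfl, id_eq] at hco₁ hco₂
        have h21 : q₁.2.1 = q₂.2.1 := by rw [hco₁, hco₂, hf]
        exact Prod.ext hf (Prod.ext h21 he)
    · refine ⟨fun p => p.2, fun q => q.2.2, fun q hq => ?_, ?_⟩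
      · rw [mem_Pat_iff] at hq
        obtain ⟨hW, hco⟩ := hq
        simp only [Fin.isValue, reduceIte, show ((fun (i : Fin 4) => i) = id) from rfl, id_eq] at hco
        obtain ⟨hab, hxy, hss, hcol⟩ := mem_Wset_iff.mp hW
        refine ⟨?_, ?_⟩
        · show q.2.2 ≠ q.1.2
          rw [← hco]; exact hxy.symm
        · show c s(q.1.2, q.2.2) = c s(q.1.1, q.1.2)
          have h' : c s(q.1.2, q.2.2) = c s(q.2.1, q.2.2) := by rw [hco]
          exact h'.trans hcol.symm
      · intro q₁ h₁ q₂ h₂ hf he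
        rw [mem_Pat_iff] at h₁ h₂
        have hco₁ := h₁.2; have hco₂ := h₂.2
        simp only [Fin.isValue, reduceIte, show ((fun (i : Fin 4) => i) = id) from rfl, id_eq] at hco₁ hco₂
        have h21 : q₁.2.1 = q₂.2.1 := by rw [hco₁, hco₂, hf]
        exact Prod.ext hf (Prod.ext h21 he)
    · refine ⟨fun p => p.1, fun q => q.2.1, fun q hq => ?_, ?_⟩
      · rw [mem_Pat_iff] at hq
        obtain ⟨hW, hco⟩ := hq
        simp only [Fin.isValue, reduceIte, show ((fun (i : Fin 4) => i) = id) from rfl, id_eq] at hco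
        obtain ⟨hab, hxy, hss, hcol⟩ := mem_Wset_iff.mp hW
        refine ⟨?_, ?_⟩
        · show q.2.1 ≠ q.1.1
          rw [← hco]; exact hxy
        · show c s(q.1.1, q.2.1) = c s(q.1.1, q.1.2)
          have h' : s(q.1.1, q.2.1) = s(q.2.1, q.2.2) := by rw [← hco, Sym2.eq_swap]
          exact (congrArg c h').trans hcol.symm
      · intro q₁ h₁ q₂ h₂ hf he
        rw [mem_Pat_iff] at h₁ h₂
        have hco₁ := h₁.2; have hco₂ := h₂.2
        simp only [Fin.isValue, reduceIte, show ((fun (i : Fin 4) => i) = id) from rfl, id_eq] at hco₁ hco₂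
        have h22 : q₁.2.2 = q₂.2.2 := by rw [hco₁, hco₂, hf]
        exact Prod.ext hf (Prod.ext he h22)
    · refine ⟨fun p => p.2, fun q => q.2.1, fun q hq => ?_, ?_⟩
      · rw [mem_Pat_iff] at hq
        obtain ⟨hW, hco⟩ := hq
        simp only [Fin.isValue, reduceIte, show ((fun (i : Fin 4) => i) = id) from rfl, id_eq] at hco
        obtain ⟨hab, hxy, hss, hcol⟩ := mem_Wset_iff.mp hW
        refine ⟨?_, ?_⟩
        · show q.2.1 ≠ q.1.2
          rw [← hco]; exact hxy
        · show c s(q.1.2, q.2.1) = c s(q.1.1, q.1.2)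
          have h' : s(q.1.2, q.2.1) = s(q.2.1, q.2.2) := by rw [← hco, Sym2.eq_swap]
          exact (congrArg c h').trans hcol.symm
      · intro q₁ h₁ q₂ h₂ hf he
        rw [mem_Pat_iff] at h₁ h₂
        have hco₁ := h₁.2; have hco₂ := h₂.2
        simp only [Fin.isValue, reduceIte, show ((fun (i : Fin 4) => i) = id) from rfl, id_eq] at hco₁ hco₂
        have h22 : q₁.2.2 = q₂.2.2 := by rw [hco₁, hco₂, hf]
        exact Prod.ext hf (Prod.ext he h22)
  obtain ⟨v, e, hve, hinj⟩ := key
  have h := card_le_sum_colorDeg (ι := Fin n × Fin n) c (Pat c k)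
    (fun q => q.1) v (fun p => c s(p.1, p.2)) e hve
    (fun q₁ h₁ q₂ h₂ => hinj q₁ h₁ q₂ h₂)
  calc ((Pat c k).card : ℝ)
      ≤ ((∑ x : Fin n × Fin n, colorDeg c (c s(x.1, x.2)) (v x) : ℕ) : ℝ) := by
        exact_mod_cast h
    _ ≤ (Fintype.card (Fin n × Fin n)) * (δ * n) := sum_colorDeg_le_real c _ _ δ hdeg
    _ = n ^ 2 * (δ * n) := by
        push_cast [Fintype.card_prod, Fintype.card_fin]
        ring

lemma verts_card_of_mem {c : Sym2 (Fin n) → C} {q : QT n} (hq : q ∈ Wset c) :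
    (verts q).card = 3 ∨ (verts q).card = 4 := by
  obtain ⟨⟨a, b⟩, ⟨x, y⟩⟩ := q
  simp only [Wset, mem_filter] at hq
  obtain ⟨-, hab, hxy, hss, -⟩ := hq
  have hne : ¬(a = x ∧ b = y) ∧ ¬(a = y ∧ b = x) :=
    ⟨fun h => hss (by rw [h.1, h.2]), fun h => hss (by rw [h.1, h.2, Sym2.eq_swap])⟩
  have hle : (verts ((a, b), (x, y))).card ≤ 4 := by
    simp only [verts]
    apply le_trans (Finset.card_insert_le _ _)
    apply Nat.succ_le_succ
    apply le_trans (Finset.card_insert_le _ _)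
    apply Nat.succ_le_succ
    apply le_trans (Finset.card_insert_le _ _)
    apply Nat.succ_le_succ
    simp
  have hge : 3 ≤ (verts ((a, b), (x, y))).card := by
    by_contra hcon
    push_neg at hcon
    have hsub : ({a, b} : Finset (Fin n)) ⊆ verts ((a, b), (x, y)) := by
      simp only [verts]
      intro z hz
      simp only [Finset.mem_insert, Finset.mem_singleton] at hz ⊢
      tauto
    have hab2 : ({a, b} : Finset (Fin n)).card = 2 := Finset.card_pair hab
    have heq : ({a, b} : Finset (Fin n)) = verts ((a, b), (x, y)) :=
      Finset.eq_of_subset_of_card_le hsub (by omega)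
    have hx : x ∈ ({a, b} : Finset (Fin n)) := by
      rw [heq]; simp [verts]
    have hy : y ∈ ({a, b} : Finset (Fin n)) := by
      rw [heq]; simp [verts]
    simp only [Finset.mem_insert, Finset.mem_singleton] at hx hy
    rcases hx with rfl | rfl <;> rcases hy with rfl | rfl <;> tauto
  omega

lemma W3_subset_pats (c : Sym2 (Fin n) → C) :
    (Wset c).filter (fun q => (verts q).card = 3) ⊆
      Pat c 0 ∪ Pat c 1 ∪ Pat c 2 ∪ Pat c 3 := by
  intro q hq
  simp only [mem_filter] at hq
  obtain ⟨hW, h3⟩ := hq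
  simp only [Finset.mem_union, Pat, mem_filter]
  by_contra hcon
  push_neg at hcon
  obtain ⟨⟨a, b⟩, ⟨x, y⟩⟩ := q
  have hW' := hW
  simp only [Wset, mem_filter] at hW'
  obtain ⟨-, hab, hxy, hss, -⟩ := hW'
  have hxa : x ≠ a := fun h => (hcon.1.1.1 hW) h
  have hxb : x ≠ b := fun h => (hcon.1.1.2 hW) h
  have hya : y ≠ a := fun h => (hcon.1.2 hW) h
  have hyb : y ≠ b := fun h => (hcon.2 hW) h
  have : (verts ((a, b), (x, y))).card = 4 := by
    simp only [verts]
    rw [Finset.card_insert_of_notMem (by simp [hab, hxa.symm, hya.symm]),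
        Finset.card_insert_of_notMem (by simp [hxb.symm, hyb.symm]),
        Finset.card_insert_of_notMem (by simp [hxy]),
        Finset.card_singleton]
  simp only [verts] at h3 this
  omega

set_option maxHeartbeats 1600000 in
lemma card_eight {α : Type*} [DecidableEq α] {a b x y : α} (hab : ¬(a = b)) (hxy : ¬(x = y))
    (hab' : ¬(b = a)) (hxy' : ¬(y = x))
    (hne1 : ¬(a = x ∧ b = y)) (hne2 : ¬(a = y ∧ b = x)) :
    ({((a, b), (x, y)), ((b, a), (x, y)), ((a, b), (y, x)), ((b, a), (y, x)),
      ((x, y), (a, b)), ((y, x), (a, b)), ((x, y), (b, a)), ((y, x), (b, a))} :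
      Finset ((α × α) × (α × α))).card = 8 := by
  rw [Finset.card_insert_of_notMem (by
        simp only [Finset.mem_insert, Finset.mem_singleton, Prod.mk.injEq]; tauto),
      Finset.card_insert_of_notMem (by
        simp only [Finset.mem_insert, Finset.mem_singleton, Prod.mk.injEq]; tauto),
      Finset.card_insert_of_notMem (by
        simp only [Finset.mem_insert, Finset.mem_singleton, Prod.mk.injEq]; tauto),
      Finset.card_insert_of_notMem (by
        simp only [Finset.mem_insert, Finset.mem_singleton, Prod.mk.injEq]; tauto),
      Finset.card_insert_of_notMem (by
        simp only [Finset.mem_insert, Finset.mem_singleton, Prod.mk.injEq]; tauto),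
      Finset.card_insert_of_notMem (by
        simp only [Finset.mem_insert, Finset.mem_singleton, Prod.mk.injEq]; tauto),
      Finset.card_insert_of_notMem (by
        simp only [Finset.mem_singleton, Prod.mk.injEq]; tauto),
      Finset.card_singleton]

lemma eight_le_witnesses (c : Sym2 (Fin n) → C) {S : Finset (Fin n)}
    (hS : ¬ IsRainbow c S) :
    8 ≤ ((Wset c).filter fun q => verts q ⊆ S).card := by
  unfold IsRainbow at hS
  push_neg at hS
  obtain ⟨a, ha, b, hb, x, hx, y, hy, hab, hxy, hss, hcol⟩ := hS
  have hmem : ∀ a' b' x' y' : Fin n, a' ∈ S → b' ∈ S → x' ∈ S → y' ∈ S →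
      a' ≠ b' → x' ≠ y' → s(a', b') ≠ s(x', y') → c s(a', b') = c s(x', y') →
      ((a', b'), (x', y')) ∈ ((Wset c).filter fun q => verts q ⊆ S) := by
    intro a' b' x' y' ha' hb' hx' hy' h1 h2 h3 h4
    rw [mem_filter]
    refine ⟨mem_Wset_iff.mpr ⟨h1, h2, h3, h4⟩, ?_⟩
    intro z hz
    simp only [verts, Finset.mem_insert, Finset.mem_singleton] at hz
    rcases hz with rfl | rfl | rfl | rfl <;> assumption
  have eab : s(b, a) = s(a, b) := Sym2.eq_swap
  have exy : s(y, x) = s(x, y) := Sym2.eq_swap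
  set F := ((Wset c).filter fun q => verts q ⊆ S) with hF
  have m1 : ((a, b), (x, y)) ∈ F := hmem a b x y ha hb hx hy hab hxy hss hcol
  have m2 : ((b, a), (x, y)) ∈ F := hmem b a x y hb ha hx hy hab.symm hxy
    (by rw [eab]; exact hss) (by rw [eab]; exact hcol)
  have m3 : ((a, b), (y, x)) ∈ F := hmem a b y x ha hb hy hx hab hxy.symm
    (by rw [exy]; exact hss) (by rw [exy]; exact hcol)
  have m4 : ((b, a), (y, x)) ∈ F := hmem b a y x hb ha hy hx hab.symm hxy.symm
    (by rw [eab, exy]; exact hss) (by rw [eab, exy]; exact hcol)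
  have m5 : ((x, y), (a, b)) ∈ F := hmem x y a b hx hy ha hb hxy hab hss.symm hcol.symm
  have m6 : ((y, x), (a, b)) ∈ F := hmem y x a b hy hx ha hb hxy.symm hab
    (by rw [exy]; exact hss.symm) (by rw [exy]; exact hcol.symm)
  have m7 : ((x, y), (b, a)) ∈ F := hmem x y b a hx hy hb ha hxy hab.symm
    (by rw [eab]; exact hss.symm) (by rw [eab]; exact hcol.symm)
  have m8 : ((y, x), (b, a)) ∈ F := hmem y x b a hy hx hb ha hxy.symm hab.symm
    (by rw [eab, exy]; exact hss.symm) (by rw [eab, exy]; exact hcol.symm)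
  have hne1 : ¬(a = x ∧ b = y) := fun h => hss (by rw [h.1, h.2])
  have hne2 : ¬(a = y ∧ b = x) := fun h => hss (by rw [h.1, h.2, Sym2.eq_swap])
  have hab' : ¬(b = a) := fun h => hab h.symm
  have hxy' : ¬(y = x) := fun h => hxy h.symm
  have hsub : ({((a, b), (x, y)), ((b, a), (x, y)), ((a, b), (y, x)), ((b, a), (y, x)),
      ((x, y), (a, b)), ((y, x), (a, b)), ((x, y), (b, a)), ((y, x), (b, a))} :
      Finset (QT n)) ⊆ F := by
    intro q hq
    simp only [Finset.mem_insert, Finset.mem_singleton] at hq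
    rcases hq with rfl | rfl | rfl | rfl | rfl | rfl | rfl | rfl <;> assumption
  exact le_trans (le_of_eq (card_eight hab hxy hab' hxy' hne1 hne2).symm)
    (Finset.card_le_card hsub)

end FNR


set_option maxHeartbeats 2000000 in
/-- **Lemma 2.** If an edge-coloring of `K_n` satisfies `d_i(x) ≤ δ n` for each vertex `x`
and each color `i`, then it has at most `(5/8) δ t⁴ C(n,t)` non-rainbow copies of `K_t`. -/
theorem few_nonrainbow_cliques
    (n t : ℕ) {C : Type*} [DecidableEq C] (c : Sym2 (Fin n) → C)
    (δ : ℝ) (hδ : 0 < δ)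
    (hdeg : ∀ (x : Fin n) (i : C), (colorDeg c i x : ℝ) ≤ δ * n) :
    (((((univ : Finset (Fin n)).powersetCard t).filter
        fun S => ¬ IsRainbow c S).card : ℝ))
      ≤ 5 / 8 * δ * t ^ 4 * (n.choose t) := by
  classical
  have hA : (0:ℝ) ≤ (n.choose t : ℝ) := Nat.cast_nonneg _
  by_cases hnt : n < t
  · have hemp : (univ : Finset (Fin n)).powersetCard t = ∅ := by
      rw [Finset.powersetCard_eq_empty, Finset.card_univ, Fintype.card_fin]
      exact hnt
    rw [hemp]
    simp only [Finset.filter_empty, Finset.card_empty, Nat.cast_zero]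
    positivity
  push_neg at hnt
  by_cases ht2 : t ≤ 2
  · have hemp : (((univ : Finset (Fin n)).powersetCard t).filter
        fun S => ¬ IsRainbow c S) = ∅ := by
      rw [Finset.filter_eq_empty_iff]
      intro S hS
      rw [Finset.mem_powersetCard] at hS
      intro hnr
      apply hnr
      intro a ha b hb x hx y hy hab hxy hss
      exfalso
      have hsub : ({a, b} : Finset (Fin n)) ⊆ S := by
        intro z hz
        simp only [Finset.mem_insert, Finset.mem_singleton] at hz
        rcases hz with rfl | rfl <;> assumption
      have hab2 : ({a, b} : Finset (Fin n)).card = 2 := Finset.card_pair hab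
      have heq : ({a, b} : Finset (Fin n)) = S :=
        Finset.eq_of_subset_of_card_le hsub (by omega)
      have hx' : x ∈ ({a, b} : Finset (Fin n)) := heq ▸ hx
      have hy' : y ∈ ({a, b} : Finset (Fin n)) := heq ▸ hy
      simp only [Finset.mem_insert, Finset.mem_singleton] at hx' hy'
      rcases hx' with rfl | rfl <;> rcases hy' with rfl | rfl
      · exact hxy rfl
      · exact hss rfl
      · exact hss (Sym2.eq_swap)
      · exact hxy rfl
    rw [hemp]
    simp only [Finset.card_empty, Nat.cast_zero]
    positivity
  push_neg at ht2
  have h3t : 3 ≤ t := ht2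
  have hPC : ((univ : Finset (Fin n)).powersetCard t).card = n.choose t := by
    rw [Finset.card_powersetCard, Finset.card_univ, Fintype.card_fin]
  by_cases htriv : 1 ≤ 5 / 8 * δ * (t : ℝ) ^ 4
  · calc ((((univ : Finset (Fin n)).powersetCard t).filter
        fun S => ¬ IsRainbow c S).card : ℝ)
        ≤ (((univ : Finset (Fin n)).powersetCard t).card : ℝ) := by
          exact_mod_cast Finset.card_filter_le _ _
      _ = (n.choose t : ℝ) := by rw [hPC]
      _ ≤ 5 / 8 * δ * (t : ℝ) ^ 4 * (n.choose t : ℝ) := le_mul_of_one_le_left hA htriv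
  push_neg at htriv
  -- δ * n ≥ 1
  have h2n : 2 ≤ n := by omega
  have hδn : (1:ℝ) ≤ δ * n := by
    have h01 : (⟨1, by omega⟩ : Fin n) ≠ (⟨0, by omega⟩ : Fin n) := by
      simp [Fin.ext_iff]
    have hone : 1 ≤ colorDeg c (c s((⟨0, by omega⟩ : Fin n), (⟨1, by omega⟩ : Fin n)))
        (⟨0, by omega⟩ : Fin n) := by
      rw [colorDeg]
      refine Finset.card_pos.mpr ⟨(⟨1, by omega⟩ : Fin n), ?_⟩
      simp [h01]
    calc (1:ℝ) ≤ (colorDeg c (c s((⟨0, by omega⟩ : Fin n), (⟨1, by omega⟩ : Fin n)))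
        (⟨0, by omega⟩ : Fin n) : ℝ) := by exact_mod_cast hone
      _ ≤ δ * n := hdeg _ _
  have ht3r : (3:ℝ) ≤ (t:ℝ) := by exact_mod_cast h3t
  have h51 : 51 ≤ n := by
    by_contra hcon
    push_neg at hcon
    have hn50 : (n:ℝ) ≤ 50 := by exact_mod_cast Nat.lt_succ_iff.mp hcon
    have ht4 : (81:ℝ) ≤ (t:ℝ) ^ 4 := by
      calc (81:ℝ) = 3 ^ 4 := by norm_num
        _ ≤ (t:ℝ) ^ 4 := pow_le_pow_left₀ (by norm_num) ht3r 4
    have hδpos : 0 < δ := hδ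
    nlinarith [mul_le_mul_of_nonneg_left hn50 hδpos.le]
  have hn51r : (51:ℝ) ≤ (n:ℝ) := by exact_mod_cast h51
  -- the witness set and its pieces
  set W := FNR.Wset c with hW
  set W3 := W.filter (fun q => (FNR.verts q).card = 3) with hW3
  set Wn3 := W.filter (fun q => ¬ (FNR.verts q).card = 3) with hWn3
  set C3 := (n - 3).choose (t - 3) with hC3
  set E4 := if 4 ≤ t then (n - 4).choose (t - 4) else 0 with hE4
  set B := ((univ : Finset (Fin n)).powersetCard t).filter (fun S => ¬ IsRainbow c S)
    with hBdef
  have ext_eq3 : ∀ q ∈ W3, (((univ : Finset (Fin n)).powersetCard t).filter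
      (fun S => FNR.verts q ⊆ S)).card = C3 := by
    intro q hq
    rw [hW3, Finset.mem_filter] at hq
    rw [card_supersets _ (by rw [hq.2]; omega), hq.2, Fintype.card_fin]
  have ext_le4 : ∀ q ∈ Wn3, (((univ : Finset (Fin n)).powersetCard t).filter
      (fun S => FNR.verts q ⊆ S)).card ≤ E4 := by
    intro q hq
    rw [hWn3, Finset.mem_filter] at hq
    have hv4 : (FNR.verts q).card = 4 := by
      rcases FNR.verts_card_of_mem hq.1 with h | h
      · exact absurd h hq.2
      · exact h
    by_cases h4t : 4 ≤ t
    · rw [hE4, if_pos h4t]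
      rw [card_supersets _ (by rw [hv4]; omega), hv4, Fintype.card_fin]
    · have : (((univ : Finset (Fin n)).powersetCard t).filter
          (fun S => FNR.verts q ⊆ S)) = ∅ := by
        rw [Finset.filter_eq_empty_iff]
        intro S hS hsub
        rw [Finset.mem_powersetCard] at hS
        have := Finset.card_le_card hsub
        omega
      rw [this]
      simp
  have key : 8 * B.card ≤ W3.card * C3 + Wn3.card * E4 := by
    calc 8 * B.card = ∑ _S ∈ B, 8 := by rw [Finset.sum_const, smul_eq_mul, mul_comm]
      _ ≤ ∑ S ∈ B, (W.filter fun q => FNR.verts q ⊆ S).card := by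
          refine Finset.sum_le_sum fun S hS => ?_
          rw [hBdef, Finset.mem_filter] at hS
          exact FNR.eight_le_witnesses c hS.2
      _ = ∑ q ∈ W, (B.filter fun S => FNR.verts q ⊆ S).card := by
          simp_rw [Finset.card_filter]
          exact Finset.sum_comm
      _ ≤ ∑ q ∈ W, (((univ : Finset (Fin n)).powersetCard t).filter
            (fun S => FNR.verts q ⊆ S)).card := by
          refine Finset.sum_le_sum fun q hq => ?_
          exact Finset.card_le_card
            (Finset.filter_subset_filter _ (Finset.filter_subset _ _))
      _ = ∑ q ∈ W3, (((univ : Finset (Fin n)).powersetCard t).filter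
            (fun S => FNR.verts q ⊆ S)).card
          + ∑ q ∈ Wn3, (((univ : Finset (Fin n)).powersetCard t).filter
            (fun S => FNR.verts q ⊆ S)).card := by
          rw [hW3, hWn3]
          exact (Finset.sum_filter_add_sum_filter_not _ _ _).symm
      _ ≤ W3.card * C3 + Wn3.card * E4 := by
          gcongr ?_ + ?_
          · rw [Finset.sum_congr rfl ext_eq3, Finset.sum_const, smul_eq_mul]
          · calc ∑ q ∈ Wn3, (((univ : Finset (Fin n)).powersetCard t).filter
                (fun S => FNR.verts q ⊆ S)).card ≤ ∑ _q ∈ Wn3, E4 :=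
                  Finset.sum_le_sum ext_le4
              _ = Wn3.card * E4 := by rw [Finset.sum_const, smul_eq_mul]
  -- real bounds on W3 and Wn3
  have hW3r : (W3.card : ℝ) ≤ 4 * ((n:ℝ) ^ 2 * (δ * n)) := by
    have hsub := FNR.W3_subset_pats c
    have hcard : W3.card ≤ (FNR.Pat c 0).card + (FNR.Pat c 1).card
        + (FNR.Pat c 2).card + (FNR.Pat c 3).card := by
      calc W3.card ≤ (FNR.Pat c 0 ∪ FNR.Pat c 1 ∪ FNR.Pat c 2 ∪ FNR.Pat c 3).card :=
            Finset.card_le_card hsub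
        _ ≤ (FNR.Pat c 0 ∪ FNR.Pat c 1 ∪ FNR.Pat c 2).card + (FNR.Pat c 3).card :=
            Finset.card_union_le _ _
        _ ≤ (FNR.Pat c 0 ∪ FNR.Pat c 1).card + (FNR.Pat c 2).card + (FNR.Pat c 3).card := by
            have := Finset.card_union_le (FNR.Pat c 0 ∪ FNR.Pat c 1) (FNR.Pat c 2)
            omega
        _ ≤ (FNR.Pat c 0).card + (FNR.Pat c 1).card + (FNR.Pat c 2).card
              + (FNR.Pat c 3).card := by
            have := Finset.card_union_le (FNR.Pat c 0) (FNR.Pat c 1)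
            omega
    calc (W3.card : ℝ) ≤ ((FNR.Pat c 0).card : ℝ) + ((FNR.Pat c 1).card : ℝ)
          + ((FNR.Pat c 2).card : ℝ) + ((FNR.Pat c 3).card : ℝ) := by exact_mod_cast hcard
      _ ≤ 4 * ((n:ℝ) ^ 2 * (δ * n)) := by
          have b0 := FNR.Pat_card_le c δ 0 hdeg
          have b1 := FNR.Pat_card_le c δ 1 hdeg
          have b2 := FNR.Pat_card_le c δ 2 hdeg
          have b3 := FNR.Pat_card_le c δ 3 hdeg
          linarith
  have hWn3r : (Wn3.card : ℝ) ≤ (n:ℝ) ^ 3 * (δ * n) := by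
    calc (Wn3.card : ℝ) ≤ (W.card : ℝ) := by
          exact_mod_cast Finset.card_le_card (Finset.filter_subset _ _)
      _ ≤ (n:ℝ) ^ 3 * (δ * n) := FNR.Wset_card_le c δ hdeg
  -- cast identities
  have hn0 : (0:ℝ) ≤ (n:ℝ) := Nat.cast_nonneg _
  have ht0 : (0:ℝ) ≤ (t:ℝ) := Nat.cast_nonneg _
  have hC3r : (0:ℝ) ≤ (C3 : ℝ) := Nat.cast_nonneg _
  have hE4r : (0:ℝ) ≤ (E4 : ℝ) := Nat.cast_nonneg _
  have cast3 : ((n - 1 : ℕ) : ℝ) = (n:ℝ) - 1 := by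
    rw [Nat.cast_sub (by omega)]; norm_num
  have cast4 : ((n - 2 : ℕ) : ℝ) = (n:ℝ) - 2 := by
    rw [Nat.cast_sub (by omega)]; norm_num
  have cast5 : ((n - 3 : ℕ) : ℝ) = (n:ℝ) - 3 := by
    rw [Nat.cast_sub (by omega)]; norm_num
  have cast6 : ((t - 1 : ℕ) : ℝ) = (t:ℝ) - 1 := by
    rw [Nat.cast_sub (by omega)]; norm_num
  have cast7 : ((t - 2 : ℕ) : ℝ) = (t:ℝ) - 2 := by
    rw [Nat.cast_sub (by omega)]; norm_num
  have target1 : (n:ℝ) ^ 3 * (C3 : ℝ) ≤ 8 / 7 * (t:ℝ) ^ 3 * (n.choose t : ℝ) := by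
    have idr3 : (n:ℝ) * ((n:ℝ) - 1) * ((n:ℝ) - 2) * (C3 : ℝ)
        = (t:ℝ) * ((t:ℝ) - 1) * ((t:ℝ) - 2) * (n.choose t : ℝ) := by
      have hid := choose_id3 h3t hnt
      have := congrArg (fun m : ℕ => (m : ℝ)) hid
      push_cast at this
      rw [cast3, cast4, cast6, cast7] at this
      exact_mod_cast this
    have h78 : 7 * (n:ℝ) ^ 2 ≤ 8 * (((n:ℝ) - 1) * ((n:ℝ) - 2)) := by nlinarith
    have e1 : 7 * ((n:ℝ) ^ 3 * (C3 : ℝ)) ≤ 8 * (((n:ℝ) - 1) * ((n:ℝ) - 2)) * ((n:ℝ) * (C3:ℝ)) := by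
      nlinarith [mul_nonneg hn0 hC3r]
    have e2 : 8 * (((n:ℝ) - 1) * ((n:ℝ) - 2)) * ((n:ℝ) * (C3:ℝ))
        = 8 * ((t:ℝ) * ((t:ℝ) - 1) * ((t:ℝ) - 2) * (n.choose t : ℝ)) := by
      rw [← idr3]; ring
    have h12 : ((t:ℝ) - 1) * ((t:ℝ) - 2) ≤ (t:ℝ) ^ 2 := by nlinarith
    have e3 : (t:ℝ) * ((t:ℝ) - 1) * ((t:ℝ) - 2) * (n.choose t : ℝ)
        ≤ (t:ℝ) ^ 3 * (n.choose t : ℝ) := by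
      nlinarith [mul_nonneg ht0 hA, h12]
    linarith
  have target2 : (n:ℝ) ^ 4 * (E4 : ℝ) ≤ 8 / 7 * (t:ℝ) ^ 4 * (n.choose t : ℝ) := by
    by_cases h4t : 4 ≤ t
    · have cast8 : ((n - 4 : ℕ) : ℝ) = (n:ℝ) - 4 := by
        rw [Nat.cast_sub (by omega)]; norm_num
      have cast9 : ((t - 3 : ℕ) : ℝ) = (t:ℝ) - 3 := by
        rw [Nat.cast_sub (by omega)]; norm_num
      have hE4eq : (E4 : ℝ) = ((n - 4).choose (t - 4) : ℝ) := by
        rw [hE4, if_pos h4t]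
      have idr4 : (n:ℝ) * ((n:ℝ) - 1) * ((n:ℝ) - 2) * ((n:ℝ) - 3) * (E4 : ℝ)
          = (t:ℝ) * ((t:ℝ) - 1) * ((t:ℝ) - 2) * ((t:ℝ) - 3) * (n.choose t : ℝ) := by
        have hid := choose_id4 h4t hnt
        have := congrArg (fun m : ℕ => (m : ℝ)) hid
        push_cast at this
        rw [cast3, cast4, cast5, cast6, cast7, cast9] at this
        rw [hE4eq]
        exact_mod_cast this
      have h78b : 7 * (n:ℝ) ^ 3 ≤ 8 * (((n:ℝ) - 1) * ((n:ℝ) - 2) * ((n:ℝ) - 3)) := by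
        nlinarith [sq_nonneg ((n:ℝ) - 51), sq_nonneg (n:ℝ)]
      have e1 : 7 * ((n:ℝ) ^ 4 * (E4 : ℝ))
          ≤ 8 * (((n:ℝ) - 1) * ((n:ℝ) - 2) * ((n:ℝ) - 3)) * ((n:ℝ) * (E4:ℝ)) := by
        nlinarith [mul_nonneg hn0 hE4r]
      have e2 : 8 * (((n:ℝ) - 1) * ((n:ℝ) - 2) * ((n:ℝ) - 3)) * ((n:ℝ) * (E4:ℝ))
          = 8 * ((t:ℝ) * ((t:ℝ) - 1) * ((t:ℝ) - 2) * ((t:ℝ) - 3) * (n.choose t : ℝ)) := by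
        rw [← idr4]; ring
      have ht4r : (4:ℝ) ≤ (t:ℝ) := by exact_mod_cast h4t
      have h123 : ((t:ℝ) - 1) * ((t:ℝ) - 2) * ((t:ℝ) - 3) ≤ (t:ℝ) ^ 3 := by nlinarith
      have e3 : (t:ℝ) * ((t:ℝ) - 1) * ((t:ℝ) - 2) * ((t:ℝ) - 3) * (n.choose t : ℝ)
          ≤ (t:ℝ) ^ 4 * (n.choose t : ℝ) := by
        nlinarith [mul_nonneg ht0 hA, h123]
      linarith
    · have : E4 = 0 := by rw [hE4, if_neg h4t]
      rw [this]
      simp only [Nat.cast_zero, mul_zero]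
      positivity
  -- finish
  have keyr : 8 * (B.card : ℝ) ≤ (W3.card : ℝ) * (C3 : ℝ) + (Wn3.card : ℝ) * (E4 : ℝ) := by
    exact_mod_cast key
  have step : (W3.card : ℝ) * (C3 : ℝ) + (Wn3.card : ℝ) * (E4 : ℝ)
      ≤ 4 * δ * ((n:ℝ) ^ 3 * (C3:ℝ)) + δ * ((n:ℝ) ^ 4 * (E4:ℝ)) := by
    have s1 : (W3.card : ℝ) * (C3 : ℝ) ≤ (4 * ((n:ℝ) ^ 2 * (δ * n))) * (C3 : ℝ) :=
      mul_le_mul_of_nonneg_right hW3r hC3r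
    have s2 : (Wn3.card : ℝ) * (E4 : ℝ) ≤ ((n:ℝ) ^ 3 * (δ * n)) * (E4 : ℝ) :=
      mul_le_mul_of_nonneg_right hWn3r hE4r
    have r1 : (4 * ((n:ℝ) ^ 2 * (δ * n))) * (C3 : ℝ) = 4 * δ * ((n:ℝ) ^ 3 * (C3:ℝ)) := by
      ring
    have r2 : ((n:ℝ) ^ 3 * (δ * n)) * (E4 : ℝ) = δ * ((n:ℝ) ^ 4 * (E4:ℝ)) := by ring
    linarith
  have tcube : (t:ℝ) ^ 3 ≤ (t:ℝ) ^ 4 / 3 := by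
    have h := mul_le_mul_of_nonneg_right ht3r (pow_nonneg ht0 3)
    have h2 : (t:ℝ) * (t:ℝ) ^ 3 = (t:ℝ) ^ 4 := by ring
    linarith
  have final : 8 * (B.card : ℝ) ≤ 5 * δ * (t:ℝ) ^ 4 * (n.choose t : ℝ) := by
    have m1 : 4 * δ * ((n:ℝ) ^ 3 * (C3:ℝ)) ≤ 4 * δ * (8 / 7 * (t:ℝ) ^ 3 * (n.choose t : ℝ)) :=
      mul_le_mul_of_nonneg_left target1 (by positivity)
    have m2 : δ * ((n:ℝ) ^ 4 * (E4:ℝ)) ≤ δ * (8 / 7 * (t:ℝ) ^ 4 * (n.choose t : ℝ)) :=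
      mul_le_mul_of_nonneg_left target2 hδ.le
    have m3 : 4 * δ * (8 / 7 * (t:ℝ) ^ 3 * (n.choose t : ℝ))
        ≤ 4 * δ * (8 / 7 * ((t:ℝ) ^ 4 / 3) * (n.choose t : ℝ)) := by
      have : 8 / 7 * (t:ℝ) ^ 3 * (n.choose t : ℝ)
          ≤ 8 / 7 * ((t:ℝ) ^ 4 / 3) * (n.choose t : ℝ) := by
        have := mul_le_mul_of_nonneg_right
          (mul_le_mul_of_nonneg_left tcube (by norm_num : (0:ℝ) ≤ 8/7)) hA
        linarith
      nlinarith [hδ.le]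
    have sum_le : 4 * δ * (8 / 7 * ((t:ℝ) ^ 4 / 3) * (n.choose t : ℝ))
        + δ * (8 / 7 * (t:ℝ) ^ 4 * (n.choose t : ℝ))
        ≤ 5 * δ * (t:ℝ) ^ 4 * (n.choose t : ℝ) := by
      have h83 : 4 * (8 / 7 / 3) + 8 / 7 ≤ (5:ℝ) := by norm_num
      nlinarith [mul_nonneg (mul_nonneg hδ.le (pow_nonneg ht0 4)) hA]
    linarith
  linarith
end

section
/- (Dependent random choice.) Let G be a graph with n vertices and let V_1 be a subset of the vertex set with |V_1| = m in which each vertex has degree at least αn in G. Let d and h be positive integers and β a positive real with β ≤ m^(−d/h). Then there is a subset V_2 ⊆ V_1 with |V_2| ≥ α^h · m − 1 such that every d-element subset of V_2 has at least βn common neighbors in G. -/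
open Finset

lemma count_tuples (n h : ℕ) (p : Fin n → Prop) [DecidablePred p] :
    ((univ : Finset (Fin h → Fin n)).filter fun f => ∀ i, p (f i)).card
      = (univ.filter p).card ^ h := by
  have : ((univ : Finset (Fin h → Fin n)).filter fun f => ∀ i, p (f i))
      = Fintype.piFinset (fun _ : Fin h => univ.filter p) := by
    ext f; simp [Fintype.mem_piFinset]
  rw [this, Fintype.card_piFinset]
  simp

/-- **Lemma 4 (dependent random choice).** If `G` is a graph on `n` vertices and `V₁` is a
set of `m` vertices each of degree at least `α n`, and `β ≤ m^(-d/h)`, then there is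
`V₂ ⊆ V₁` with `|V₂| ≥ αʰ m − 1` such that every `d` vertices of `V₂` have at least `β n`
common neighbors. -/
theorem dependent_random_choice
    (n m d h : ℕ) (hn : 0 < n) (hm : 0 < m) (hd : 0 < d) (hh : 0 < h)
    (G : SimpleGraph (Fin n)) [DecidableRel G.Adj]
    (α β : ℝ) (hα : 0 < α) (hβ : 0 < β)
    (V₁ : Finset (Fin n)) (hcard : V₁.card = m)
    (hdeg : ∀ x ∈ V₁, α * n ≤ G.degree x)
    (hβm : β ≤ (m : ℝ) ^ (-(d : ℝ) / h)) :
    ∃ V₂ ⊆ V₁, α ^ h * m - 1 ≤ (V₂.card : ℝ) ∧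
      ∀ D ⊆ V₂, D.card = d →
        β * n ≤ ((univ.filter fun y => ∀ x ∈ D, G.Adj x y).card : ℝ) := by
  classical
  set A : (Fin h → Fin n) → Finset (Fin n) :=
    fun f => V₁.filter fun v => ∀ i, G.Adj (f i) v with hA
  set cN : Finset (Fin n) → ℕ :=
    fun D => (univ.filter fun y => ∀ x ∈ D, G.Adj x y).card with hcN
  set Bad : Finset (Finset (Fin n)) :=
    (V₁.powersetCard d).filter fun D => (cN D : ℝ) < β * n with hBad
  set bad : (Fin h → Fin n) → ℕ := fun f => (Bad.filter fun D => D ⊆ A f).card with hbad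
  -- step 1
  have step1 : ∑ f : Fin h → Fin n, (A f).card = ∑ v ∈ V₁, (G.degree v) ^ h := by
    simp only [hA, Finset.card_filter]
    rw [Finset.sum_comm]
    refine Finset.sum_congr rfl fun v hv => ?_
    rw [← Finset.card_filter, count_tuples n h (fun u => G.Adj u v)]
    congr 1
    rw [← SimpleGraph.card_neighborFinset_eq_degree, SimpleGraph.neighborFinset_eq_filter]
    congr 1
    ext u; simp [G.adj_comm]
  -- step 2
  have step2 : ∑ f : Fin h → Fin n, bad f = ∑ D ∈ Bad, (cN D) ^ h := by
    simp only [hbad, Finset.card_filter]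
    rw [Finset.sum_comm]
    refine Finset.sum_congr rfl fun D hD => ?_
    have hDV : D ⊆ V₁ := by
      simp only [hBad, mem_filter, mem_powersetCard] at hD; exact hD.1.1
    have : ∀ f : Fin h → Fin n, D ⊆ A f ↔ ∀ i, f i ∈ (univ.filter fun y => ∀ x ∈ D, G.Adj x y) := by
      intro f
      constructor
      · intro hs i
        simp only [mem_filter, mem_univ, true_and]
        intro x hx
        exact ((mem_filter.1 (hs hx)).2 i).symm
      · intro hs x hx
        refine mem_filter.2 ⟨hDV hx, fun i => ?_⟩
        exact ((mem_filter.1 (hs i)).2 x hx).symm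
    rw [Finset.sum_congr rfl (fun f _ => by rw [if_congr (this f) rfl rfl]),
      ← Finset.card_filter,
      count_tuples n h (fun u => u ∈ (univ.filter fun y => ∀ x ∈ D, G.Adj x y))]
    simp [hcN]
  -- real bounds
  have hn' : (0:ℝ) < n := by exact_mod_cast hn
  have hm' : (0:ℝ) < m := by exact_mod_cast hm
  have L : (m:ℝ) * (α*n)^h ≤ ∑ f : Fin h → Fin n, ((A f).card : ℝ) := by
    have e1 : ∑ f : Fin h → Fin n, ((A f).card : ℝ) = ∑ v ∈ V₁, ((G.degree v : ℝ))^h := by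
      exact_mod_cast congrArg (Nat.cast : ℕ → ℝ) step1
    rw [e1]
    calc (m:ℝ) * (α*n)^h = ∑ _v ∈ V₁, (α*n)^h := by
          rw [Finset.sum_const, hcard, nsmul_eq_mul]
      _ ≤ ∑ v ∈ V₁, ((G.degree v : ℝ))^h :=
          Finset.sum_le_sum fun v hv => pow_le_pow_left₀ (by positivity) (hdeg v hv) h
  have U : ∑ f : Fin h → Fin n, (bad f : ℝ) ≤ (m:ℝ)^d * (β*n)^h := by
    have e2 : ∑ f : Fin h → Fin n, (bad f : ℝ) = ∑ D ∈ Bad, ((cN D : ℝ))^h := by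
      exact_mod_cast congrArg (Nat.cast : ℕ → ℝ) step2
    rw [e2]
    have hBc : (Bad.card : ℝ) ≤ (m:ℝ)^d := by
      have h1 : Bad.card ≤ (V₁.powersetCard d).card := Finset.card_filter_le _ _
      have h2 : (V₁.powersetCard d).card = m.choose d := by
        rw [Finset.card_powersetCard, hcard]
      have h3 : m.choose d ≤ m ^ d := Nat.choose_le_pow m d
      exact_mod_cast (h1.trans (h2 ▸ h3))
    calc ∑ D ∈ Bad, ((cN D : ℝ))^h ≤ ∑ _D ∈ Bad, (β*n)^h := by
          refine Finset.sum_le_sum fun D hD => ?_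
          have : (cN D : ℝ) < β * n := (Finset.mem_filter.1 hD).2
          exact pow_le_pow_left₀ (by positivity) this.le h
      _ = (Bad.card : ℝ) * (β*n)^h := by rw [Finset.sum_const, nsmul_eq_mul]
      _ ≤ (m:ℝ)^d * (β*n)^h := by
          exact mul_le_mul_of_nonneg_right hBc (by positivity)
  have hβh : (m:ℝ)^d * β^h ≤ 1 := by
    have h1 : β^h ≤ ((m:ℝ) ^ (-(d:ℝ)/h))^h := pow_le_pow_left₀ hβ.le hβm h
    have h2 : ((m:ℝ) ^ (-(d:ℝ)/h))^h = (m:ℝ) ^ (-(d:ℝ)) := by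
      rw [← Real.rpow_natCast ((m:ℝ) ^ (-(d:ℝ)/h)) h, ← Real.rpow_mul hm'.le]
      congr 1
      field_simp
    have h3 : (m:ℝ)^d * (m:ℝ)^(-(d:ℝ)) = 1 := by
      rw [← Real.rpow_natCast (m:ℝ) d, ← Real.rpow_add hm']
      simp
    calc (m:ℝ)^d * β^h ≤ (m:ℝ)^d * (m:ℝ)^(-(d:ℝ)) := by
          refine mul_le_mul_of_nonneg_left (h1.trans_eq h2) (by positivity)
      _ = 1 := h3
  -- averaging
  have key : ∃ f : Fin h → Fin n, α^h * m - 1 ≤ ((A f).card : ℝ) - bad f := by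
    by_contra hcon
    push_neg at hcon
    have hne : Nonempty (Fin n) := ⟨⟨0, hn⟩⟩
    have hlt : ∑ f : Fin h → Fin n, (((A f).card : ℝ) - bad f)
        < ∑ _f : Fin h → Fin n, (α^h * m - 1) :=
      Finset.sum_lt_sum_of_nonempty Finset.univ_nonempty fun f _ => hcon f
    have hcardF : (Finset.univ : Finset (Fin h → Fin n)).card = n ^ h := by
      simp [Fintype.card_fun]
    rw [Finset.sum_const, hcardF, nsmul_eq_mul] at hlt
    have hsum : (n:ℝ)^h * (α^h * m - 1) ≤ ∑ f : Fin h → Fin n, (((A f).card : ℝ) - bad f) := by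
      rw [Finset.sum_sub_distrib]
      have : (m:ℝ)^d * (β*n)^h ≤ (n:ℝ)^h := by
        rw [mul_pow]
        calc (m:ℝ)^d * (β^h * (n:ℝ)^h) = ((m:ℝ)^d * β^h) * (n:ℝ)^h := by ring
          _ ≤ 1 * (n:ℝ)^h := mul_le_mul_of_nonneg_right hβh (by positivity)
          _ = (n:ℝ)^h := one_mul _
      have hL' : (n:ℝ)^h * (α^h * m) ≤ ∑ f : Fin h → Fin n, ((A f).card : ℝ) := by
        calc (n:ℝ)^h * (α^h * m) = (m:ℝ) * (α*n)^h := by rw [mul_pow]; ring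
          _ ≤ _ := L
      have hU' : ∑ f : Fin h → Fin n, (bad f : ℝ) ≤ (n:ℝ)^h := U.trans this
      nlinarith [pow_pos hn' h]
    have hcast : ((n:ℝ))^h = ((n^h : ℕ) : ℝ) := by push_cast; ring
    rw [hcast] at hsum
    exact absurd (hsum.trans_lt hlt) (lt_irrefl _)
  obtain ⟨f, hf⟩ := key
  -- construct V₂
  set B : Finset (Finset (Fin n)) := Bad.filter (fun D => D ⊆ A f) with hB
  have hBne : ∀ D ∈ B, D.Nonempty := by
    intro D hD
    have : D.card = d := (Finset.mem_powersetCard.1 (Finset.mem_filter.1 (Finset.mem_filter.1 hD).1).1).2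
    exact Finset.card_pos.1 (this ▸ hd)
  set pick : Finset (Fin n) → Fin n :=
    fun D => if hD : D.Nonempty then D.min' hD else ⟨0, hn⟩ with hpick
  set S : Finset (Fin n) := B.image pick with hS
  refine ⟨A f \ S, ?_, ?_, ?_⟩
  · exact (Finset.sdiff_subset).trans (Finset.filter_subset _ _)
  · have h1 : (A f).card ≤ (A f \ S).card + S.card := Finset.card_le_card_sdiff_add_card
    have h2 : S.card ≤ B.card := Finset.card_image_le
    have : ((A f).card : ℝ) ≤ ((A f \ S).card : ℝ) + bad f := by
      have := h1.trans (Nat.add_le_add_left h2 _)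
      exact_mod_cast this
    linarith
  · intro D hD hDc
    by_contra hcon
    push_neg at hcon
    have hDA : D ⊆ A f := hD.trans Finset.sdiff_subset
    have hDB : D ∈ B := by
      refine Finset.mem_filter.2 ⟨Finset.mem_filter.2 ⟨Finset.mem_powersetCard.2
        ⟨hDA.trans (Finset.filter_subset _ _), hDc⟩, hcon⟩, hDA⟩
    have hDne : D.Nonempty := hBne D hDB
    have hpD : pick D ∈ D := by
      rw [hpick]; simp only [dif_pos hDne]; exact Finset.min'_mem _ _
    have hpS : pick D ∈ S := Finset.mem_image_of_mem pick hDB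
    have := hD hpD
    exact (Finset.mem_sdiff.1 this).2 hpS
end

section
/- Let d and k be integers with d ≥ 2 and k ≥ 2. Then every k-edge-coloring of the complete graph K_n with n ≥ d^(12k) that contains no rainbow copy of K_d must contain a monochromatic copy of K_4. -/
open Finset

variable {n k : ℕ}

def CherP (c : Sym2 (Fin n) → Fin k) (t : Fin n × Fin n × Fin n) : Prop :=
  t.2.1 ≠ t.1 ∧ t.2.2 ≠ t.1 ∧ t.2.1 ≠ t.2.2 ∧ c s(t.1, t.2.1) = c s(t.1, t.2.2)

def MatP (c : Sym2 (Fin n) → Fin k) (q : Fin n × Fin n × Fin n × Fin n) : Prop :=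
  q.1 < q.2.1 ∧ q.2.2.1 < q.2.2.2 ∧ q.1 ≠ q.2.2.1 ∧ q.1 ≠ q.2.2.2 ∧
    q.2.1 ≠ q.2.2.1 ∧ q.2.1 ≠ q.2.2.2 ∧ c s(q.1, q.2.1) = c s(q.2.2.1, q.2.2.2)

instance (c : Sym2 (Fin n) → Fin k) (t) : Decidable (CherP c t) := by unfold CherP; infer_instance
instance (c : Sym2 (Fin n) → Fin k) (q) : Decidable (MatP c q) := by unfold MatP; infer_instance

def spanW : (Fin n × Fin n × Fin n) ⊕ (Fin n × Fin n × Fin n × Fin n) → Finset (Fin n) :=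
  Sum.elim (fun t => {t.1, t.2.1, t.2.2}) (fun q => {q.1, q.2.1, q.2.2.1, q.2.2.2})

lemma cherP_mk (c : Sym2 (Fin n) → Fin k) {z u v : Fin n} (h1 : u ≠ z) (h2 : v ≠ z)
    (h3 : u ≠ v) (h4 : c s(z, u) = c s(z, v)) : CherP c (z, u, v) := ⟨h1, h2, h3, h4⟩

lemma spanW_inl_subset {S : Finset (Fin n)} {z u v : Fin n} (hz : z ∈ S) (hu : u ∈ S)
    (hv : v ∈ S) : spanW (Sum.inl (z, u, v)) ⊆ S := by
  simp only [spanW, Sum.elim_inl]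
  intro w hw; simp only [mem_insert, mem_singleton] at hw
  rcases hw with rfl | rfl | rfl <;> assumption

lemma spanW_inr_subset {S : Finset (Fin n)} {a b x y : Fin n} (ha : a ∈ S) (hb : b ∈ S)
    (hx : x ∈ S) (hy : y ∈ S) : spanW (Sum.inr (a, b, x, y)) ⊆ S := by
  simp only [spanW, Sum.elim_inr]
  intro w hw; simp only [mem_insert, mem_singleton] at hw
  rcases hw with rfl | rfl | rfl | rfl <;> assumption

lemma exists_witness (c : Sym2 (Fin n) → Fin k) {S : Finset (Fin n)} (h : ¬ IsRainbow c S) :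
    ∃ w : (Fin n × Fin n × Fin n) ⊕ (Fin n × Fin n × Fin n × Fin n),
      Sum.elim (CherP c) (MatP c) w ∧ spanW w ⊆ S := by
  unfold IsRainbow at h
  push_neg at h
  obtain ⟨a, ha, b, hb, x, hx, y, hy, hab, hxy, hne, hceq⟩ := h
  by_cases hax : a = x
  · subst hax
    exact ⟨Sum.inl (a, b, y), cherP_mk c hab.symm hxy.symm
      (by rintro rfl; exact hne rfl) hceq, spanW_inl_subset ha hb hy⟩
  · by_cases hay : a = y
    · subst hay
      exact ⟨Sum.inl (a, b, x), cherP_mk c hab.symm hxy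
        (by rintro rfl; exact hne Sym2.eq_swap) (by rw [hceq, Sym2.eq_swap]),
        spanW_inl_subset ha hb hx⟩
    · by_cases hbx : b = x
      · subst hbx
        exact ⟨Sum.inl (b, a, y), cherP_mk c hab hxy.symm hay
          (by rw [Sym2.eq_swap, hceq]), spanW_inl_subset hb ha hy⟩
      · by_cases hby : b = y
        · subst hby
          exact ⟨Sum.inl (b, a, x), cherP_mk c hab hxy hax
            (by rw [Sym2.eq_swap, hceq, Sym2.eq_swap]), spanW_inl_subset hb ha hx⟩
        · rcases hab.lt_or_gt with h1 | h1 <;> rcases hxy.lt_or_gt with h2 | h2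
          · exact ⟨Sum.inr (a, b, x, y), ⟨h1, h2, hax, hay, hbx, hby, hceq⟩,
              spanW_inr_subset ha hb hx hy⟩
          · exact ⟨Sum.inr (a, b, y, x), ⟨h1, h2, hay, hax, hby, hbx,
              by rw [hceq, Sym2.eq_swap]⟩, spanW_inr_subset ha hb hy hx⟩
          · exact ⟨Sum.inr (b, a, x, y), ⟨h1, h2, hbx, hby, hax, hay,
              by rw [Sym2.eq_swap, hceq]⟩, spanW_inr_subset hb ha hx hy⟩
          · exact ⟨Sum.inr (b, a, y, x), ⟨h1, h2, hby, hbx, hay, hax,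
              by rw [Sym2.eq_swap, hceq, Sym2.eq_swap]⟩, spanW_inr_subset hb ha hy hx⟩

lemma count_supersets {V : Type*} [DecidableEq V] (W T : Finset V) (hTW : T ⊆ W) (d : ℕ) :
    ((W.powersetCard d).filter (fun S => T ⊆ S)).card ≤
      (W.card - T.card).choose (d - T.card) := by
  rw [← Finset.card_sdiff_of_subset hTW, ← Finset.card_powersetCard]
  apply Finset.card_le_card_of_injOn (fun S => S \ T)
  · intro S hS
    simp only [Finset.mem_coe, mem_filter, Finset.mem_powersetCard] at hS ⊢
    obtain ⟨⟨hSW, hScard⟩, hTS⟩ := hS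
    refine ⟨fun z hz => ?_, ?_⟩
    · simp only [Finset.mem_sdiff] at hz ⊢
      exact ⟨hSW hz.1, hz.2⟩
    · rw [Finset.card_sdiff_of_subset hTS, hScard]
  · intro S1 h1 S2 h2 hh
    simp only [coe_filter, Set.mem_setOf_eq, Finset.mem_powersetCard] at h1 h2
    have e1 : S1 \ T ∪ T = S1 := Finset.sdiff_union_of_subset h1.2
    have e2 : S2 \ T ∪ T = S2 := Finset.sdiff_union_of_subset h2.2
    simp only [] at hh
    rw [← e1, ← e2]
    exact congrArg (· ∪ T) hh

lemma spanW_inl_card (c : Sym2 (Fin n) → Fin k) {t : Fin n × Fin n × Fin n}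
    (h : CherP c t) : (spanW (Sum.inl t)).card = 3 := by
  obtain ⟨h1, h2, h3, -⟩ := h
  simp only [spanW, Sum.elim_inl]
  rw [Finset.card_insert_of_notMem, Finset.card_insert_of_notMem, Finset.card_singleton]
  · simp only [Finset.mem_singleton]; exact h3
  · simp only [Finset.mem_insert, Finset.mem_singleton]
    push_neg
    exact ⟨h1.symm, h2.symm⟩

lemma spanW_inr_card (c : Sym2 (Fin n) → Fin k) {q : Fin n × Fin n × Fin n × Fin n}
    (h : MatP c q) : (spanW (Sum.inr q)).card = 4 := by
  obtain ⟨h1, h2, h3, h4, h5, h6, -⟩ := h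
  simp only [spanW, Sum.elim_inr]
  rw [Finset.card_insert_of_notMem, Finset.card_insert_of_notMem,
    Finset.card_insert_of_notMem, Finset.card_singleton]
  · simp only [Finset.mem_singleton]; exact h2.ne
  · simp only [Finset.mem_insert, Finset.mem_singleton]
    push_neg
    exact ⟨h5, h6⟩
  · simp only [Finset.mem_insert, Finset.mem_singleton]
    push_neg
    exact ⟨h1.ne, h3, h4⟩

lemma count_main (c : Sym2 (Fin n) → Fin k) (d : ℕ) (hd : 3 ≤ d) (h0 : 0 < n)
    {W : Finset (Fin n)}
    (hnr : ∀ S : Finset (Fin n), S.card = d → ¬ IsRainbow c S) :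
    (W.card).choose d ≤
      ((W ×ˢ W ×ˢ W).filter (CherP c)).card * ((W.card - 3).choose (d - 3)) +
      ((W ×ˢ W ×ˢ W ×ˢ W).filter (MatP c)).card *
        (if 4 ≤ d then (W.card - 4).choose (d - 4) else 0) := by
  classical
  have : Inhabited (Fin n) := ⟨⟨0, h0⟩⟩
  have hex : ∀ S ∈ W.powersetCard d,
      ∃ w, Sum.elim (CherP c) (MatP c) w ∧ spanW w ⊆ S := fun S hS =>
    exists_witness c (hnr S (Finset.mem_powersetCard.mp hS).2)
  choose! Φ hΦ using hex
  set Cher := (W ×ˢ W ×ˢ W).filter (CherP c) with hCher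
  set Mat := (W ×ˢ W ×ˢ W ×ˢ W).filter (MatP c) with hMat
  have maps : ∀ S ∈ W.powersetCard d, Φ S ∈ Cher.disjSum Mat := by
    intro S hS
    obtain ⟨hgood, hspan⟩ := hΦ S hS
    have hSW : S ⊆ W := (Finset.mem_powersetCard.mp hS).1
    match hw : Φ S with
    | Sum.inl t =>
      rw [hw] at hgood hspan
      rw [Finset.inl_mem_disjSum, hCher, Finset.mem_filter]
      simp only [Sum.elim_inl] at hgood
      refine ⟨?_, hgood⟩
      have h1 : t.1 ∈ W := hSW (hspan (by simp [spanW]))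
      have h2 : t.2.1 ∈ W := hSW (hspan (by simp [spanW]))
      have h3 : t.2.2 ∈ W := hSW (hspan (by simp [spanW]))
      simp only [Finset.mem_product]
      exact ⟨h1, h2, h3⟩
    | Sum.inr q =>
      rw [hw] at hgood hspan
      rw [Finset.inr_mem_disjSum, hMat, Finset.mem_filter]
      simp only [Sum.elim_inr] at hgood
      refine ⟨?_, hgood⟩
      have h1 : q.1 ∈ W := hSW (hspan (by simp [spanW]))
      have h2 : q.2.1 ∈ W := hSW (hspan (by simp [spanW]))
      have h3 : q.2.2.1 ∈ W := hSW (hspan (by simp [spanW]))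
      have h4 : q.2.2.2 ∈ W := hSW (hspan (by simp [spanW]))
      simp only [Finset.mem_product]
      exact ⟨h1, h2, h3, h4⟩
  have hcount := Finset.card_eq_sum_card_fiberwise maps
  rw [Finset.card_powersetCard] at hcount
  rw [hcount, Finset.sum_disjSum]
  have bound1 : ∀ t ∈ Cher,
      ((W.powersetCard d).filter (fun S => Φ S = Sum.inl t)).card ≤
        (W.card - 3).choose (d - 3) := by
    intro t ht
    rw [hCher, Finset.mem_filter] at ht
    have hspan3 : (spanW (Sum.inl t)).card = 3 := spanW_inl_card c ht.2
    have hsubW : spanW (Sum.inl t) ⊆ W := by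
      simp only [spanW, Sum.elim_inl]
      intro z hz
      simp only [Finset.mem_insert, Finset.mem_singleton] at hz
      have := ht.1
      simp only [Finset.mem_product] at this
      rcases hz with rfl | rfl | rfl
      exacts [this.1, this.2.1, this.2.2]
    calc ((W.powersetCard d).filter (fun S => Φ S = Sum.inl t)).card
        ≤ ((W.powersetCard d).filter (fun S => spanW (Sum.inl t) ⊆ S)).card := by
          apply Finset.card_le_card
          intro S hS
          rw [Finset.mem_filter] at hS ⊢
          refine ⟨hS.1, ?_⟩
          have := (hΦ S hS.1).2
          rwa [hS.2] at this
      _ ≤ (W.card - (spanW (Sum.inl t)).card).choose (d - (spanW (Sum.inl t)).card) :=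
          count_supersets W _ hsubW d
      _ = (W.card - 3).choose (d - 3) := by rw [hspan3]
  have bound2 : ∀ q ∈ Mat,
      ((W.powersetCard d).filter (fun S => Φ S = Sum.inr q)).card ≤
        (if 4 ≤ d then (W.card - 4).choose (d - 4) else 0) := by
    intro q hq
    rw [hMat, Finset.mem_filter] at hq
    have hspan4 : (spanW (Sum.inr q)).card = 4 := spanW_inr_card c hq.2
    by_cases hd4 : 4 ≤ d
    · rw [if_pos hd4]
      have hsubW : spanW (Sum.inr q) ⊆ W := by
        simp only [spanW, Sum.elim_inr]
        intro z hz
        simp only [Finset.mem_insert, Finset.mem_singleton] at hz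
        have := hq.1
        simp only [Finset.mem_product] at this
        rcases hz with rfl | rfl | rfl | rfl
        exacts [this.1, this.2.1, this.2.2.1, this.2.2.2]
      calc ((W.powersetCard d).filter (fun S => Φ S = Sum.inr q)).card
          ≤ ((W.powersetCard d).filter (fun S => spanW (Sum.inr q) ⊆ S)).card := by
            apply Finset.card_le_card
            intro S hS
            rw [Finset.mem_filter] at hS ⊢
            refine ⟨hS.1, ?_⟩
            have := (hΦ S hS.1).2
            rwa [hS.2] at this
        _ ≤ (W.card - (spanW (Sum.inr q)).card).choose (d - (spanW (Sum.inr q)).card) :=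
            count_supersets W _ hsubW d
        _ = (W.card - 4).choose (d - 4) := by rw [hspan4]
    · rw [if_neg hd4, Nat.le_zero, Finset.card_eq_zero, Finset.filter_eq_empty_iff]
      intro S hS
      intro hcon
      have hsp := (hΦ S hS).2
      rw [hcon] at hsp
      have h1 : (spanW (Sum.inr q)).card ≤ S.card := Finset.card_le_card hsp
      rw [hspan4, (Finset.mem_powersetCard.mp hS).2] at h1
      omega
  calc (∑ t ∈ Cher, ((W.powersetCard d).filter (fun S => Φ S = Sum.inl t)).card) +
        (∑ q ∈ Mat, ((W.powersetCard d).filter (fun S => Φ S = Sum.inr q)).card)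
      ≤ (∑ _t ∈ Cher, (W.card - 3).choose (d - 3)) +
        (∑ _q ∈ Mat, (if 4 ≤ d then (W.card - 4).choose (d - 4) else 0)) := by
        exact Nat.add_le_add (Finset.sum_le_sum bound1) (Finset.sum_le_sum bound2)
    _ = Cher.card * ((W.card - 3).choose (d - 3)) +
        Mat.card * (if 4 ≤ d then (W.card - 4).choose (d - 4) else 0) := by
        rw [Finset.sum_const, Finset.sum_const, smul_eq_mul, smul_eq_mul]

/-- neighborhood of `z` in color `i` within `W` -/
def nbrF (c : Sym2 (Fin n) → Fin k) (W : Finset (Fin n)) (z : Fin n) (i : Fin k) :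
    Finset (Fin n) :=
  W.filter (fun y => y ≠ z ∧ c s(z, y) = i)

lemma sym2_exists {α : Type*} (e : Sym2 α) : ∃ u v, e = s(u, v) := by
  induction e using Sym2.inductionOn with
  | hf a b => exact ⟨a, b, rfl⟩

lemma choose_id3_s4 (m e : ℕ) :
    (m + 3).choose (e + 3) * ((e + 1) * (e + 2) * (e + 3)) =
      (m + 1) * (m + 2) * (m + 3) * m.choose e := by
  have h1 : (m + 3) * (m + 2).choose (e + 2) = (m + 3).choose (e + 3) * (e + 3) :=
    Nat.add_one_mul_choose_eq (m + 2) (e + 2)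
  have h2 : (m + 2) * (m + 1).choose (e + 1) = (m + 2).choose (e + 2) * (e + 2) :=
    Nat.add_one_mul_choose_eq (m + 1) (e + 1)
  have h3 : (m + 1) * m.choose e = (m + 1).choose (e + 1) * (e + 1) :=
    Nat.add_one_mul_choose_eq m e
  calc (m + 3).choose (e + 3) * ((e + 1) * (e + 2) * (e + 3))
      = ((m + 3).choose (e + 3) * (e + 3)) * ((e + 1) * (e + 2)) := by ring
    _ = ((m + 3) * (m + 2).choose (e + 2)) * ((e + 1) * (e + 2)) := by rw [← h1]
    _ = ((m + 2).choose (e + 2) * (e + 2)) * ((m + 3) * (e + 1)) := by ring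
    _ = ((m + 2) * (m + 1).choose (e + 1)) * ((m + 3) * (e + 1)) := by rw [← h2]
    _ = ((m + 1).choose (e + 1) * (e + 1)) * ((m + 2) * (m + 3)) := by ring
    _ = ((m + 1) * m.choose e) * ((m + 2) * (m + 3)) := by rw [← h3]
    _ = (m + 1) * (m + 2) * (m + 3) * m.choose e := by ring

lemma choose_id4_s4 (m e : ℕ) :
    (m + 4).choose (e + 4) * ((e + 1) * (e + 2) * (e + 3) * (e + 4)) =
      (m + 1) * (m + 2) * (m + 3) * (m + 4) * m.choose e := by
  have h1 : (m + 4) * (m + 3).choose (e + 3) = (m + 4).choose (e + 4) * (e + 4) :=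
    Nat.add_one_mul_choose_eq (m + 3) (e + 3)
  calc (m + 4).choose (e + 4) * ((e + 1) * (e + 2) * (e + 3) * (e + 4))
      = ((m + 4).choose (e + 4) * (e + 4)) * ((e + 1) * (e + 2) * (e + 3)) := by ring
    _ = ((m + 4) * (m + 3).choose (e + 3)) * ((e + 1) * (e + 2) * (e + 3)) := by rw [← h1]
    _ = (m + 4) * ((m + 3).choose (e + 3) * ((e + 1) * (e + 2) * (e + 3))) := by ring
    _ = (m + 4) * ((m + 1) * (m + 2) * (m + 3) * m.choose e) := by rw [choose_id3_s4]
    _ = (m + 1) * (m + 2) * (m + 3) * (m + 4) * m.choose e := by ring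

lemma nbr_sum (c : Sym2 (Fin n) → Fin k) (W : Finset (Fin n)) {z : Fin n} (hz : z ∈ W) :
    ∑ i : Fin k, (nbrF c W z i).card = W.card - 1 := by
  rw [← Finset.card_erase_of_mem hz]
  have h := Finset.card_eq_sum_card_fiberwise
    (f := fun y => c s(z, y)) (s := W.erase z) (t := Finset.univ) (fun y _ => Finset.mem_univ _)
  rw [h]
  apply Finset.sum_congr rfl
  intro i _
  congr 1
  ext y
  simp only [nbrF, Finset.mem_filter, Finset.mem_erase]
  tauto

lemma cher_card_le (c : Sym2 (Fin n) → Fin k) (W : Finset (Fin n)) :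
    ((W ×ˢ W ×ˢ W).filter (CherP c)).card ≤
      ∑ z ∈ W, ∑ i : Fin k,
        ((nbrF c W z i).card * (nbrF c W z i).card - (nbrF c W z i).card) := by
  have maps : ∀ t ∈ (W ×ˢ W ×ˢ W).filter (CherP c), t.1 ∈ W := by
    intro t ht
    rw [Finset.mem_filter] at ht
    exact (Finset.mem_product.mp ht.1).1
  rw [Finset.card_eq_sum_card_fiberwise maps]
  apply Finset.sum_le_sum
  intro z hz
  have step1 : (((W ×ˢ W ×ˢ W).filter (CherP c)).filter (fun t => t.1 = z)).card ≤
      ((W ×ˢ W).filter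
        (fun p => p.1 ≠ z ∧ p.2 ≠ z ∧ p.1 ≠ p.2 ∧ c s(z, p.1) = c s(z, p.2))).card := by
    apply Finset.card_le_card_of_injOn (fun t => t.2)
    · intro t ht
      simp only [Finset.mem_coe, Finset.mem_filter, Finset.mem_product] at ht ⊢
      obtain ⟨⟨⟨m1, m2, m3⟩, p1, p2, p3, p4⟩, rfl⟩ := ht
      exact ⟨⟨m2, m3⟩, p1, p2, p3, p4⟩
    · intro t1 h1 t2 h2 hh
      simp only [Finset.coe_filter, Set.mem_setOf_eq] at h1 h2
      simp only [] at hh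
      have e1 : t1.1 = z := h1.2
      have e2 : t2.1 = z := h2.2
      exact Prod.ext (e1.trans e2.symm) hh
  refine step1.trans ?_
  have h := Finset.card_eq_sum_card_fiberwise
    (f := fun p : Fin n × Fin n => c s(z, p.1))
    (s := (W ×ˢ W).filter
        (fun p => p.1 ≠ z ∧ p.2 ≠ z ∧ p.1 ≠ p.2 ∧ c s(z, p.1) = c s(z, p.2)))
    (t := Finset.univ) (fun p _ => Finset.mem_univ _)
  rw [h]
  apply le_of_eq
  apply Finset.sum_congr rfl
  intro i _
  rw [← Finset.offDiag_card]
  congr 1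
  ext ⟨u, v⟩
  simp only [Finset.mem_filter, Finset.mem_product, Finset.mem_offDiag, nbrF]
  constructor
  · rintro ⟨⟨⟨hu, hv⟩, h1, h2, h3, h4⟩, h5⟩
    exact ⟨⟨hu, h1, h5⟩, ⟨hv, h2, h4 ▸ h5⟩, h3⟩
  · rintro ⟨⟨hu, h1, h5⟩, ⟨hv, h2, h6⟩, h3⟩
    exact ⟨⟨⟨hu, hv⟩, h1, h2, h3, h5.trans h6.symm⟩, h5⟩

/-- nondiagonal edges within `W` -/
def edgesF (W : Finset (Fin n)) : Finset (Sym2 (Fin n)) :=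
  W.sym2.filter (fun e => ¬ e.IsDiag)

def mcount (c : Sym2 (Fin n) → Fin k) (W : Finset (Fin n)) (i : Fin k) : ℕ :=
  ((edgesF W).filter (fun e => c e = i)).card

lemma mat_card_le (c : Sym2 (Fin n) → Fin k) (W : Finset (Fin n)) :
    ((W ×ˢ W ×ˢ W ×ˢ W).filter (MatP c)).card ≤
      ∑ i : Fin k, (mcount c W i * mcount c W i - mcount c W i) := by
  have step1 : ((W ×ˢ W ×ˢ W ×ˢ W).filter (MatP c)).card ≤
      (((edgesF W) ×ˢ (edgesF W)).filter (fun p => p.1 ≠ p.2 ∧ c p.1 = c p.2)).card := by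
    apply Finset.card_le_card_of_injOn
      (fun q => (s(q.1, q.2.1), s(q.2.2.1, q.2.2.2)))
    · intro q hq
      simp only [Finset.mem_coe, Finset.mem_filter, Finset.mem_product] at hq ⊢
      obtain ⟨⟨ha, hb, hx, hy⟩, l1, l2, d1, d2, d3, d4, hc⟩ := hq
      refine ⟨⟨?_, ?_⟩, ?_, hc⟩
      · simp only [edgesF, Finset.mem_filter, Finset.mk_mem_sym2_iff, Sym2.mk_isDiag_iff]
        exact ⟨⟨ha, hb⟩, l1.ne⟩
      · simp only [edgesF, Finset.mem_filter, Finset.mk_mem_sym2_iff, Sym2.mk_isDiag_iff]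
        exact ⟨⟨hx, hy⟩, l2.ne⟩
      · intro hcon
        rw [Sym2.eq_iff] at hcon
        rcases hcon with ⟨u, -⟩ | ⟨u, -⟩
        exacts [d1 u, d2 u]
    · intro q1 h1 q2 h2 hh
      simp only [Finset.coe_filter, Set.mem_setOf_eq] at h1 h2
      obtain ⟨l1, l2, -, -, -, -, -⟩ := h1.2
      obtain ⟨l1', l2', -, -, -, -, -⟩ := h2.2
      simp only [Prod.mk.injEq, Sym2.eq_iff] at hh
      obtain ⟨hh1, hh2⟩ := hh
      have e1 : q1.1 = q2.1 ∧ q1.2.1 = q2.2.1 := by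
        rcases hh1 with ⟨u, v⟩ | ⟨u, v⟩
        · exact ⟨u, v⟩
        · exfalso; rw [u, v] at l1; exact absurd (l1.trans l1') (lt_irrefl _)
      have e2 : q1.2.2.1 = q2.2.2.1 ∧ q1.2.2.2 = q2.2.2.2 := by
        rcases hh2 with ⟨u, v⟩ | ⟨u, v⟩
        · exact ⟨u, v⟩
        · exfalso; rw [u, v] at l2; exact absurd (l2.trans l2') (lt_irrefl _)
      exact Prod.ext e1.1 (Prod.ext e1.2 (Prod.ext e2.1 e2.2))
  refine step1.trans ?_
  have h := Finset.card_eq_sum_card_fiberwise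
    (f := fun p : Sym2 (Fin n) × Sym2 (Fin n) => c p.1)
    (s := ((edgesF W) ×ˢ (edgesF W)).filter (fun p => p.1 ≠ p.2 ∧ c p.1 = c p.2))
    (t := Finset.univ) (fun p _ => Finset.mem_univ _)
  rw [h]
  apply le_of_eq
  apply Finset.sum_congr rfl
  intro i _
  rw [mcount, ← Finset.offDiag_card]
  congr 1
  ext ⟨e, f⟩
  simp only [Finset.mem_filter, Finset.mem_product, Finset.mem_offDiag]
  constructor
  · rintro ⟨⟨⟨he, hf⟩, h1, h2⟩, h3⟩
    exact ⟨⟨he, h3⟩, ⟨hf, h2 ▸ h3⟩, h1⟩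
  · rintro ⟨⟨he, h3⟩, ⟨hf, h4⟩, h1⟩
    exact ⟨⟨⟨he, hf⟩, h1, h3.trans h4.symm⟩, h3⟩

lemma edge_count (c : Sym2 (Fin n) → Fin k) (W : Finset (Fin n)) :
    2 * (∑ i : Fin k, mcount c W i) ≤ W.card * W.card - W.card := by
  have hsum : ∑ i : Fin k, mcount c W i = (edgesF W).card := by
    have h := Finset.card_eq_sum_card_fiberwise
      (f := fun e : Sym2 (Fin n) => c e) (s := edgesF W)
      (t := Finset.univ) (fun e _ => Finset.mem_univ _)
    rw [h]
    exact Finset.sum_congr rfl (fun i _ => rfl)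
  rw [hsum, ← Finset.offDiag_card]
  have maps : ∀ p ∈ W.offDiag, s(p.1, p.2) ∈ edgesF W := by
    intro p hp
    rw [Finset.mem_offDiag] at hp
    simp only [edgesF, Finset.mem_filter, Finset.mk_mem_sym2_iff, Sym2.mk_isDiag_iff]
    exact ⟨⟨hp.1, hp.2.1⟩, hp.2.2⟩
  rw [Finset.card_eq_sum_card_fiberwise maps]
  rw [mul_comm]
  have := Finset.card_nsmul_le_sum (edgesF W)
    (fun e => (W.offDiag.filter (fun p => s(p.1, p.2) = e)).card) 2 ?_
  · simpa [smul_eq_mul] using this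
  · intro e he
    obtain ⟨u, v, rfl⟩ := sym2_exists e
    simp only [edgesF, Finset.mem_filter, Finset.mk_mem_sym2_iff, Sym2.mk_isDiag_iff] at he
    obtain ⟨⟨hu, hv⟩, hne⟩ := he
    have hsub : ({(u, v), (v, u)} : Finset (Fin n × Fin n)) ⊆
        W.offDiag.filter (fun p => s(p.1, p.2) = s(u, v)) := by
      intro p hp
      simp only [Finset.mem_insert, Finset.mem_singleton] at hp
      rcases hp with rfl | rfl
      · rw [Finset.mem_filter, Finset.mem_offDiag]
        exact ⟨⟨hu, hv, hne⟩, rfl⟩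
      · rw [Finset.mem_filter, Finset.mem_offDiag]
        exact ⟨⟨hv, hu, fun h => hne h.symm⟩, Sym2.eq_swap⟩
    have hcard : ({(u, v), (v, u)} : Finset (Fin n × Fin n)).card = 2 := by
      rw [Finset.card_insert_of_notMem, Finset.card_singleton]
      simp only [Finset.mem_singleton, Prod.mk.injEq]
      intro ⟨h1, h2⟩
      exact hne h1
    calc 2 = ({(u, v), (v, u)} : Finset (Fin n × Fin n)).card := hcard.symm
      _ ≤ _ := Finset.card_le_card hsub

lemma mcount_le_deg (c : Sym2 (Fin n) → Fin k) (W : Finset (Fin n)) (i : Fin k) :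
    mcount c W i ≤ ∑ x ∈ W, (nbrF c W x i).card := by
  have hPF : ∑ x ∈ W, (nbrF c W x i).card =
      ((W ×ˢ W).filter (fun p => p.2 ≠ p.1 ∧ c s(p.1, p.2) = i)).card := by
    have maps : ∀ p ∈ (W ×ˢ W).filter (fun p => p.2 ≠ p.1 ∧ c s(p.1, p.2) = i), p.1 ∈ W := by
      intro p hp
      rw [Finset.mem_filter] at hp
      exact (Finset.mem_product.mp hp.1).1
    rw [Finset.card_eq_sum_card_fiberwise maps]
    apply Finset.sum_congr rfl
    intro x hx
    apply Finset.card_bij (fun y _ => (x, y))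
    · intro y hy
      simp only [nbrF, Finset.mem_filter] at hy
      simp only [Finset.mem_filter, Finset.mem_product]
      exact ⟨⟨⟨hx, hy.1⟩, hy.2.1, hy.2.2⟩, trivial⟩
    · intro y1 h1 y2 h2 hh
      exact (Prod.mk.injEq _ _ _ _ ▸ hh).2
    · intro p hp
      simp only [Finset.mem_filter, Finset.mem_product] at hp
      obtain ⟨⟨⟨-, h2⟩, h3, h4⟩, h5⟩ := hp
      refine ⟨p.2, ?_, ?_⟩
      · simp only [nbrF, Finset.mem_filter]
        rw [h5] at h3 h4
        exact ⟨h2, h3, h4⟩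
      · exact Prod.ext h5.symm rfl
  rw [hPF]
  apply Finset.card_le_card_of_injOn (fun e => e.out)
  · intro e he
    simp only [Finset.mem_coe, edgesF, Finset.mem_filter] at he
    obtain ⟨⟨he1, he2⟩, he3⟩ := he
    have hout : s(e.out.1, e.out.2) = e := by rw [Sym2.mk, Prod.mk.eta, e.out_eq]
    simp only [Finset.mem_coe, Finset.mem_filter, Finset.mem_product]
    rw [← hout] at he1 he2 he3
    rw [Finset.mk_mem_sym2_iff] at he1
    rw [Sym2.mk_isDiag_iff] at he2
    exact ⟨⟨he1.1, he1.2⟩, fun h => he2 h.symm, he3⟩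
  · intro e1 h1 e2 h2 hh
    simp only [] at hh
    rw [← e1.out_eq, ← e2.out_eq, hh]

lemma key_lemma (c : Sym2 (Fin n) → Fin k) (d : ℕ) (hd : 3 ≤ d) (hk : 0 < k)
    (hnr : ∀ S : Finset (Fin n), S.card = d → ¬ IsRainbow c S)
    (W : Finset (Fin n)) (hdW : d ≤ W.card) (hW : 11 ≤ W.card) :
    ∃ x ∈ W, ∃ i : Fin k, W.card ≤ 2 * d ^ 4 * (nbrF c W x i).card := by
  classical
  have hWne : W.Nonempty := Finset.card_pos.mp (by omega)
  obtain ⟨w0, hw0⟩ := hWne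
  have h0 : 0 < n := w0.pos
  have hkne : (Finset.univ : Finset (Fin k)).Nonempty := ⟨⟨0, hk⟩, Finset.mem_univ _⟩
  have main := count_main c d hd h0 (W := W) hnr
  -- abbreviations
  set CC := ((W ×ˢ W ×ˢ W).filter (CherP c)).card with hCC
  set MC := ((W ×ˢ W ×ˢ W ×ˢ W).filter (MatP c)).card with hMC
  -- cherry analysis (used in both cases)
  have cherry_concl : ∀ m : ℕ, W.card = m + 3 →
      (m + 1) * (m + 2) * (m + 3) ≤ 2 * ((d - 2) * (d - 1) * d) * CC →
      ∃ x ∈ W, ∃ i : Fin k, W.card ≤ 2 * d ^ 4 * (nbrF c W x i).card := by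
    intro m hm h2
    obtain ⟨z0, hz0, hz0max⟩ := Finset.exists_max_image W
      (fun z => ∑ i : Fin k,
        ((nbrF c W z i).card * (nbrF c W z i).card - (nbrF c W z i).card)) ⟨w0, hw0⟩
    obtain ⟨i0, -, hi0max⟩ := Finset.exists_max_image (Finset.univ : Finset (Fin k))
      (fun i => (nbrF c W z0 i).card) hkne
    set D := (nbrF c W z0 i0).card with hD
    have hg : CC ≤ (m + 3) * ((m + 2) * (D - 1)) := by
      have hA := cher_card_le c W
      have hB : ∑ z ∈ W, (∑ i : Fin k,
          ((nbrF c W z i).card * (nbrF c W z i).card - (nbrF c W z i).card)) ≤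
          W.card * (∑ i : Fin k,
          ((nbrF c W z0 i).card * (nbrF c W z0 i).card - (nbrF c W z0 i).card)) := by
        have := Finset.sum_le_card_nsmul W _ _ (fun z hz => hz0max z hz)
        simpa [smul_eq_mul] using this
      have hC : ∑ i : Fin k,
          ((nbrF c W z0 i).card * (nbrF c W z0 i).card - (nbrF c W z0 i).card) ≤
          (m + 2) * (D - 1) := by
        have hsum := nbr_sum c W hz0
        have step : ∀ i : Fin k,
            (nbrF c W z0 i).card * (nbrF c W z0 i).card - (nbrF c W z0 i).card ≤
            (nbrF c W z0 i).card * (D - 1) := by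
          intro i
          have h1 : (nbrF c W z0 i).card ≤ D := hi0max i (Finset.mem_univ _)
          have h2 : (nbrF c W z0 i).card * (nbrF c W z0 i).card - (nbrF c W z0 i).card =
              (nbrF c W z0 i).card * ((nbrF c W z0 i).card - 1) := by
            cases h : (nbrF c W z0 i).card with
            | zero => simp
            | succ t => simp [Nat.succ_sub_one, Nat.mul_succ]
          rw [h2]
          exact Nat.mul_le_mul_left _ (by omega)
        calc ∑ i : Fin k,
            ((nbrF c W z0 i).card * (nbrF c W z0 i).card - (nbrF c W z0 i).card)
            ≤ ∑ i : Fin k, (nbrF c W z0 i).card * (D - 1) := Finset.sum_le_sum (fun i _ => step i)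
          _ = (∑ i : Fin k, (nbrF c W z0 i).card) * (D - 1) := by rw [Finset.sum_mul]
          _ = (W.card - 1) * (D - 1) := by rw [hsum]
          _ = (m + 2) * (D - 1) := by rw [hm]; norm_num
      calc CC ≤ _ := hA
        _ ≤ W.card * _ := hB
        _ ≤ (m + 3) * ((m + 2) * (D - 1)) := by
            rw [hm]; exact Nat.mul_le_mul_left _ hC
    -- combine
    have hstep : (m + 1) * ((m + 2) * (m + 3)) ≤
        (2 * ((d - 2) * (d - 1) * d) * (D - 1)) * ((m + 2) * (m + 3)) := by
      have := h2.trans (Nat.mul_le_mul_left (2 * ((d - 2) * (d - 1) * d)) hg)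
      calc (m + 1) * ((m + 2) * (m + 3)) = (m + 1) * (m + 2) * (m + 3) := by ring
        _ ≤ 2 * ((d - 2) * (d - 1) * d) * ((m + 3) * ((m + 2) * (D - 1))) := this
        _ = (2 * ((d - 2) * (d - 1) * d) * (D - 1)) * ((m + 2) * (m + 3)) := by ring
    have hfin : m + 1 ≤ 2 * ((d - 2) * (d - 1) * d) * (D - 1) :=
      Nat.le_of_mul_le_mul_right hstep (by positivity)
    have hcube : (d - 2) * (d - 1) * d ≤ d * d * d := by
      apply Nat.mul_le_mul_right
      exact Nat.mul_le_mul (by omega) (by omega)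
    have hDpos : 1 ≤ D := by
      by_contra hcon
      have : D - 1 = 0 := by omega
      rw [this, Nat.mul_zero] at hfin
      omega
    refine ⟨z0, hz0, i0, ?_⟩
    rw [← hD]
    have h1d : 1 ≤ d * d * d := by
      have h1 : 1 ≤ d := by omega
      calc 1 = 1 * 1 * 1 := by ring
        _ ≤ d * d * d := Nat.mul_le_mul (Nat.mul_le_mul h1 h1) h1
    have hd34 : 2 * (d * d * d) ≤ 2 * d ^ 4 := by
      apply Nat.mul_le_mul_left
      calc d * d * d = d ^ 3 := by ring
        _ ≤ d ^ 4 := Nat.pow_le_pow_right (by omega) (by omega)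
    have t1 : m + 1 ≤ 2 * (d * d * d) * (D - 1) := by
      calc m + 1 ≤ 2 * ((d - 2) * (d - 1) * d) * (D - 1) := hfin
        _ ≤ 2 * (d * d * d) * (D - 1) :=
          Nat.mul_le_mul_right _ (Nat.mul_le_mul_left 2 hcube)
    calc W.card = (m + 1) + 2 := by omega
      _ ≤ 2 * (d * d * d) * (D - 1) + 2 := by omega
      _ ≤ 2 * (d * d * d) * (D - 1) + 2 * (d * d * d) := by
          apply Nat.add_le_add_left
          have := Nat.mul_le_mul_left 2 h1d
          simpa using this
      _ = 2 * (d * d * d) * ((D - 1) + 1) := by ring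
      _ = 2 * (d * d * d) * D := by rw [Nat.sub_add_cancel hDpos]
      _ ≤ 2 * d ^ 4 * D := Nat.mul_le_mul_right D hd34
  have cherry_from_choose :
      (W.card).choose d ≤ 2 * (CC * ((W.card - 3).choose (d - 3))) →
      ∃ x ∈ W, ∃ i : Fin k, W.card ≤ 2 * d ^ 4 * (nbrF c W x i).card := by
    intro hch
    obtain ⟨m, hm⟩ : ∃ m, W.card = m + 3 := ⟨W.card - 3, by omega⟩
    obtain ⟨e, he⟩ : ∃ e, d = e + 3 := ⟨d - 3, by omega⟩
    apply cherry_concl m hm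
    have hCpos : 0 < m.choose e := Nat.choose_pos (by omega)
    have hid := choose_id3_s4 m e
    rw [hm, he] at hch
    simp only [Nat.add_sub_cancel] at hch
    have hmul : ((m+1)*(m+2)*(m+3)) * m.choose e ≤
        (2*((e+1)*(e+2)*(e+3))*CC) * m.choose e := by
      calc ((m+1)*(m+2)*(m+3)) * m.choose e
          = (m+3).choose (e+3) * ((e+1)*(e+2)*(e+3)) := hid.symm
        _ ≤ (2 * (CC * m.choose e)) * ((e+1)*(e+2)*(e+3)) := Nat.mul_le_mul_right _ hch
        _ = (2*((e+1)*(e+2)*(e+3))*CC) * m.choose e := by ring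
    have hres := Nat.le_of_mul_le_mul_right hmul hCpos
    rw [show d - 2 = e + 1 from by omega, show d - 1 = e + 2 from by omega,
      show d = e + 3 from he]
    exact hres
  by_cases hd4 : 4 ≤ d
  · rw [if_pos hd4] at main
    rcases le_or_gt ((W.card).choose d) (2 * (CC * ((W.card - 3).choose (d - 3)))) with hch | hch
    · exact cherry_from_choose hch
    · -- matching case
      have hmt : (W.card).choose d ≤ 2 * (MC * ((W.card - 4).choose (d - 4))) := by
        have h1 := main
        set a := CC * ((W.card - 3).choose (d - 3)) with ha
        set b := MC * ((W.card - 4).choose (d - 4)) with hb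
        omega
      obtain ⟨m, hm⟩ : ∃ m, W.card = m + 4 := ⟨W.card - 4, by omega⟩
      obtain ⟨e, he⟩ : ∃ e, d = e + 4 := ⟨d - 4, by omega⟩
      have hm7 : 7 ≤ m := by omega
      have hCpos : 0 < m.choose e := Nat.choose_pos (by omega)
      have hid := choose_id4_s4 m e
      rw [hm, he] at hmt
      simp only [Nat.add_sub_cancel] at hmt
      have hmul : ((m+1)*(m+2)*(m+3)*(m+4)) * m.choose e ≤
          (2*((e+1)*(e+2)*(e+3)*(e+4))*MC) * m.choose e := by
        calc ((m+1)*(m+2)*(m+3)*(m+4)) * m.choose e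
            = (m+4).choose (e+4) * ((e+1)*(e+2)*(e+3)*(e+4)) := hid.symm
          _ ≤ (2 * (MC * m.choose e)) * ((e+1)*(e+2)*(e+3)*(e+4)) := Nat.mul_le_mul_right _ hmt
          _ = (2*((e+1)*(e+2)*(e+3)*(e+4))*MC) * m.choose e := by ring
      have F1 : (m+1)*(m+2)*(m+3)*(m+4) ≤ 2*((e+1)*(e+2)*(e+3)*(e+4))*MC :=
        Nat.le_of_mul_le_mul_right hmul hCpos
      -- select best color and vertex
      obtain ⟨i0, -, hi0max⟩ := Finset.exists_max_image (Finset.univ : Finset (Fin k))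
        (fun i => mcount c W i) hkne
      set M := mcount c W i0 with hM
      set SM := ∑ i : Fin k, mcount c W i with hSM
      have F2 : MC ≤ SM * (M - 1) := by
        refine (mat_card_le c W).trans ?_
        have step : ∀ i : Fin k, mcount c W i * mcount c W i - mcount c W i ≤
            mcount c W i * (M - 1) := by
          intro i
          have h1 : mcount c W i ≤ M := hi0max i (Finset.mem_univ _)
          have h2 : mcount c W i * mcount c W i - mcount c W i =
              mcount c W i * (mcount c W i - 1) := by
            cases h : mcount c W i with
            | zero => simp
            | succ t => simp [Nat.succ_sub_one, Nat.mul_succ]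
          rw [h2]
          exact Nat.mul_le_mul_left _ (by omega)
        calc ∑ i : Fin k, (mcount c W i * mcount c W i - mcount c W i)
            ≤ ∑ i : Fin k, mcount c W i * (M - 1) := Finset.sum_le_sum (fun i _ => step i)
          _ = SM * (M - 1) := by rw [hSM, Finset.sum_mul]
      have F3 : 2 * SM ≤ (m+4) * (m+3) := by
        have h1 := edge_count c W
        rw [hm] at h1
        have h2 : (m+4) * (m+4) - (m+4) = (m+4)*(m+3) := by
          apply Nat.sub_eq_of_eq_add
          ring
        rw [h2] at h1
        exact h1
      obtain ⟨x0, hx0, hx0max⟩ := Finset.exists_max_image W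
        (fun x => (nbrF c W x i0).card) ⟨w0, hw0⟩
      set D := (nbrF c W x0 i0).card with hDD
      have F4 : M ≤ (m+4) * D := by
        refine (mcount_le_deg c W i0).trans ?_
        have := Finset.sum_le_card_nsmul W (fun x => (nbrF c W x i0).card) D
          (fun x hx => hx0max x hx)
        rw [hm] at this
        simpa [smul_eq_mul] using this
      have F5 : (e+1)*(e+2)*(e+3)*(e+4) ≤ d^4 := by
        have h1 : e + 1 ≤ d := by omega
        have h2 : e + 2 ≤ d := by omega
        have h3 : e + 3 ≤ d := by omega
        have h4 : e + 4 ≤ d := by omega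
        calc (e+1)*(e+2)*(e+3)*(e+4) ≤ d*d*d*d :=
            Nat.mul_le_mul (Nat.mul_le_mul (Nat.mul_le_mul h1 h2) h3) h4
          _ = d^4 := by ring
      refine ⟨x0, hx0, i0, ?_⟩
      rw [← hDD]
      by_contra hcon
      push_neg at hcon
      have hcon' : 2 * d^4 * D + 1 ≤ m + 4 := by omega
      -- chain to contradiction
      have c1 : 2*((m+1)*(m+2)*(m+3)*(m+4)) ≤ (2*((e+1)*(e+2)*(e+3)*(e+4))*(M-1)) * (2*SM) := by
        calc 2*((m+1)*(m+2)*(m+3)*(m+4))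
            ≤ 2*(2*((e+1)*(e+2)*(e+3)*(e+4))*MC) := Nat.mul_le_mul_left 2 F1
          _ ≤ 2*(2*((e+1)*(e+2)*(e+3)*(e+4))*(SM*(M-1))) :=
              Nat.mul_le_mul_left 2 (Nat.mul_le_mul_left _ F2)
          _ = (2*((e+1)*(e+2)*(e+3)*(e+4))*(M-1)) * (2*SM) := by ring
      have c2 : 2*((m+1)*(m+2)*(m+3)*(m+4)) ≤
          (2*((e+1)*(e+2)*(e+3)*(e+4))*(M-1)) * ((m+4)*(m+3)) :=
        c1.trans (Nat.mul_le_mul_left _ F3)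
      have c3 : 2*((e+1)*(e+2)*(e+3)*(e+4))*(M-1) ≤ 2*d^4*((m+4)*D) := by
        calc 2*((e+1)*(e+2)*(e+3)*(e+4))*(M-1)
            ≤ 2*d^4*(M-1) := by
              apply Nat.mul_le_mul_right
              exact Nat.mul_le_mul_left 2 F5
          _ ≤ 2*d^4*M := Nat.mul_le_mul_left _ (Nat.sub_le _ _)
          _ ≤ 2*d^4*((m+4)*D) := Nat.mul_le_mul_left _ F4
      have c4 : 2*d^4*((m+4)*D) ≤ (m+3)*(m+4) := by
        calc 2*d^4*((m+4)*D) = (2*d^4*D)*(m+4) := by ring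
          _ ≤ (m+3)*(m+4) := Nat.mul_le_mul_right _ (by omega)
      have c5 : (2*((m+1)*(m+2))) * ((m+3)*(m+4)) ≤ ((m+3)*(m+4)) * ((m+3)*(m+4)) := by
        calc (2*((m+1)*(m+2))) * ((m+3)*(m+4))
            = 2*((m+1)*(m+2)*(m+3)*(m+4)) := by ring
          _ ≤ (2*((e+1)*(e+2)*(e+3)*(e+4))*(M-1)) * ((m+4)*(m+3)) := c2
          _ ≤ (2*d^4*((m+4)*D)) * ((m+4)*(m+3)) := Nat.mul_le_mul_right _ c3
          _ ≤ ((m+3)*(m+4)) * ((m+4)*(m+3)) := Nat.mul_le_mul_right _ c4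
          _ = ((m+3)*(m+4)) * ((m+3)*(m+4)) := by ring
      have c6 : 2*((m+1)*(m+2)) ≤ (m+3)*(m+4) :=
        Nat.le_of_mul_le_mul_right c5 (by positivity)
      have eX : 2*((m+1)*(m+2)) = 2*(m*m) + 6*m + 4 := by ring
      have eY : (m+3)*(m+4) = m*m + 7*m + 12 := by ring
      rw [eX, eY] at c6
      have hmm : 7*m ≤ m*m := Nat.mul_le_mul_right m (by omega)
      linarith
  · -- d = 3
    rw [if_neg hd4] at main
    simp only [Nat.mul_zero, Nat.add_zero] at main
    apply cherry_from_choose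
    calc (W.card).choose d ≤ CC * ((W.card - 3).choose (d - 3)) := main
      _ ≤ 2 * (CC * ((W.card - 3).choose (d - 3))) := Nat.le_mul_of_pos_left _ (by omega)

lemma chain_lemma (c : Sym2 (Fin n) → Fin k) (d : ℕ) (hd : 3 ≤ d) (hk : 0 < k)
    (hnr : ∀ S : Finset (Fin n), S.card = d → ¬ IsRainbow c S) :
    ∀ (m : ℕ) (W : Finset (Fin n)), (2 * d ^ 4) ^ m ≤ W.card →
    ∃ (v : ℕ → Fin n) (g : ℕ → Fin k),
      (∀ j, j ≤ m → v j ∈ W) ∧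
      (∀ p q, p < q → q ≤ m → v p ≠ v q ∧ c s(v p, v q) = g p) := by
  intro m
  induction m with
  | zero =>
    intro W hW
    simp only [pow_zero] at hW
    have hWpos : 0 < W.card := by omega
    obtain ⟨x0, hx0⟩ := Finset.card_pos.mp hWpos
    exact ⟨fun _ => x0, fun _ => ⟨0, hk⟩, fun j _ => hx0, fun p q hpq hq => by omega⟩
  | succ m ih =>
    intro W hW
    have h2d : 0 < 2 * d ^ 4 := by positivity
    have hdd : 2 * d ^ 4 ≤ (2 * d ^ 4) ^ (m + 1) := Nat.le_self_pow (by omega) _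
    have h81 : 81 ≤ d ^ 4 := by
      calc (81 : ℕ) = 3 ^ 4 := by norm_num
        _ ≤ d ^ 4 := Nat.pow_le_pow_left hd 4
    have hd4d : d ≤ 2 * d ^ 4 := by
      have : d ≤ d ^ 4 := by
        calc d = d ^ 1 := (pow_one d).symm
          _ ≤ d ^ 4 := Nat.pow_le_pow_right (by omega) (by omega)
      omega
    have hcard : 2 * d ^ 4 ≤ W.card := le_trans hdd hW
    have h162 : (162 : ℕ) ≤ 2 * d ^ 4 := by
      calc (162 : ℕ) = 2 * 81 := by norm_num
        _ ≤ 2 * d ^ 4 := Nat.mul_le_mul_left 2 h81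
    have hcard162 : 162 ≤ W.card := le_trans h162 hcard
    obtain ⟨x, hx, i, hxi⟩ := key_lemma c d hd hk hnr W (le_trans hd4d hcard)
      (le_trans (by norm_num) hcard162)
    set W' := nbrF c W x i with hW'def
    have hW' : (2 * d ^ 4) ^ m ≤ W'.card := by
      have hh : (2 * d ^ 4) * (2 * d ^ 4) ^ m ≤ (2 * d ^ 4) * W'.card := by
        calc (2 * d ^ 4) * (2 * d ^ 4) ^ m = (2 * d ^ 4) ^ (m + 1) := by ring
          _ ≤ W.card := hW
          _ ≤ 2 * d ^ 4 * W'.card := hxi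
      exact Nat.le_of_mul_le_mul_left hh h2d
    obtain ⟨v', g', hmem', hpair'⟩ := ih W' hW'
    refine ⟨fun j => if j = 0 then x else v' (j - 1),
      fun j => if j = 0 then i else g' (j - 1), ?_, ?_⟩
    · intro j hj
      by_cases h : j = 0
      · simp only [h, if_pos rfl]; exact hx
      · simp only [if_neg h]
        have : v' (j - 1) ∈ W' := hmem' (j - 1) (by omega)
        exact Finset.filter_subset _ W this
    · intro p q hpq hq
      have hq0 : q ≠ 0 := by omega
      by_cases hp : p = 0
      · simp only [hp, if_pos rfl, if_neg hq0]
        have hmem : v' (q - 1) ∈ W' := hmem' (q - 1) (by omega)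
        rw [hW'def, nbrF, Finset.mem_filter] at hmem
        exact ⟨Ne.symm hmem.2.1, hmem.2.2⟩
      · simp only [if_neg hp, if_neg hq0]
        exact hpair' (p - 1) (q - 1) (by omega) (by omega)

lemma pow_ineq (j : ℕ) : 2 ^ (2 * j + 5) ≤ 3 ^ (4 * j + 4) := by
  induction j with
  | zero => norm_num
  | succ j ih =>
    have e1 : 2 * (j + 1) + 5 = (2 * j + 5) + 2 := by ring
    have e2 : 4 * (j + 1) + 4 = (4 * j + 4) + 4 := by ring
    rw [e1, e2, pow_add 2 (2 * j + 5) 2, pow_add 3 (4 * j + 4) 4]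
    calc 2 ^ (2 * j + 5) * 2 ^ 2 ≤ 3 ^ (4 * j + 4) * 2 ^ 2 :=
        Nat.mul_le_mul_right _ ih
      _ ≤ 3 ^ (4 * j + 4) * 3 ^ 4 := Nat.mul_le_mul_left _ (by norm_num)


/-- **Lemma 5.** For integers `d, k ≥ 2`, every `k`-edge-coloring of `K_n` with
`n ≥ d^(12k)` and without a rainbow `K_d` has a monochromatic `K_4`. -/
theorem mono_K4_of_no_rainbow
    (d k n : ℕ) (hd : 2 ≤ d) (hk : 2 ≤ k) (hn : d ^ (12 * k) ≤ n)
    (c : Sym2 (Fin n) → Fin k)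
    (hnr : ∀ S : Finset (Fin n), S.card = d → ¬ IsRainbow c S) :
    ∃ S : Finset (Fin n), S.card = 4 ∧ IsMonochromatic c S := by
  classical
  by_cases hd2 : d ≤ 2
  · -- d = 2 : impossible, every 2-set is vacuously rainbow
    exfalso
    have hd2' : d = 2 := by omega
    subst hd2'
    have hn2 : 2 ≤ n := by
      have h1 : (2 : ℕ) ≤ 2 ^ (12 * k) := by
        calc (2 : ℕ) = 2 ^ 1 := (pow_one 2).symm
          _ ≤ 2 ^ (12 * k) := Nat.pow_le_pow_right (by omega) (by omega)
      exact le_trans h1 hn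
    have hne : (⟨0, by omega⟩ : Fin n) ≠ ⟨1, by omega⟩ := by
      simp [Fin.ext_iff]
    set u0 : Fin n := ⟨0, by omega⟩
    set u1 : Fin n := ⟨1, by omega⟩
    have hcard : ({u0, u1} : Finset (Fin n)).card = 2 := by
      rw [Finset.card_insert_of_notMem (by simp [hne]), Finset.card_singleton]
    apply hnr {u0, u1} hcard
    intro a ha b hb x hx y hy hab hxy hne'
    exfalso
    apply hne'
    have key : ∀ p ∈ ({u0, u1} : Finset (Fin n)), ∀ q ∈ ({u0, u1} : Finset (Fin n)),
        p ≠ q → s(p, q) = s(u0, u1) := by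
      intro p hp q hq hpq
      simp only [Finset.mem_insert, Finset.mem_singleton] at hp hq
      rcases hp with rfl | rfl <;> rcases hq with rfl | rfl
      · exact absurd rfl hpq
      · rfl
      · exact Sym2.eq_swap
      · exact absurd rfl hpq
    rw [key a ha b hb hab, key x hx y hy hxy]
  · have hd3 : 3 ≤ d := by omega
    have hk0 : 0 < k := by omega
    obtain ⟨j, rfl⟩ : ∃ j, k = j + 2 := ⟨k - 2, by omega⟩
    obtain ⟨m, hm⟩ : ∃ m, m = 2 * (j + 2) + 1 := ⟨_, rfl⟩
    have hpow : (2 * d ^ 4) ^ m ≤ n := by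
      have e0 : m = 2 * j + 5 := by omega
      have e1 : (2 * d ^ 4) ^ m = 2 ^ (2 * j + 5) * d ^ (8 * j + 20) := by
        rw [e0, mul_pow, ← pow_mul]
        have : 4 * (2 * j + 5) = 8 * j + 20 := by ring
        rw [this]
      have e2 : d ^ (12 * (j + 2)) = d ^ (4 * j + 4) * d ^ (8 * j + 20) := by
        rw [← pow_add]
        have : 4 * j + 4 + (8 * j + 20) = 12 * (j + 2) := by ring
        rw [this]
      have h23 : 2 ^ (2 * j + 5) ≤ d ^ (4 * j + 4) :=
        le_trans (pow_ineq j) (Nat.pow_le_pow_left hd3 _)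
      calc (2 * d ^ 4) ^ m = 2 ^ (2 * j + 5) * d ^ (8 * j + 20) := e1
        _ ≤ d ^ (4 * j + 4) * d ^ (8 * j + 20) := Nat.mul_le_mul_right _ h23
        _ = d ^ (12 * (j + 2)) := e2.symm
        _ ≤ n := hn
    obtain ⟨v, g, hmem, hpair⟩ := chain_lemma c d hd3 hk0 hnr m Finset.univ
      (by rw [Finset.card_univ, Fintype.card_fin]; exact hpow)
    -- pigeonhole: some color appears three times among g 0 .. g (m-1)
    have hlt : (Finset.univ : Finset (Fin (j + 2))).card * 2 < (Finset.range m).card := by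
      rw [Finset.card_univ, Fintype.card_fin, Finset.card_range]
      omega
    obtain ⟨i0, -, hfib⟩ := Finset.exists_lt_card_fiber_of_mul_lt_card_of_maps_to
      (fun a _ => Finset.mem_univ (g a)) hlt
    obtain ⟨F, hFsub, hFcard⟩ := Finset.exists_subset_card_eq
      (show 3 ≤ ((Finset.range m).filter (fun a => g a = i0)).card from hfib)
    rw [Finset.card_eq_three] at hFcard
    obtain ⟨a, b, c', hab, hac, hbc, hFeq⟩ := hFcard
    have hAp : a < m ∧ g a = i0 := by
      have := hFsub (show a ∈ F by rw [hFeq]; simp)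
      simpa [Finset.mem_filter, Finset.mem_range] using this
    have hBp : b < m ∧ g b = i0 := by
      have := hFsub (show b ∈ F by rw [hFeq]; simp)
      simpa [Finset.mem_filter, Finset.mem_range] using this
    have hCp : c' < m ∧ g c' = i0 := by
      have := hFsub (show c' ∈ F by rw [hFeq]; simp)
      simpa [Finset.mem_filter, Finset.mem_range] using this
    have hsorted : ∃ p q r : ℕ, p < q ∧ q < r ∧ g p = i0 ∧ g q = i0 ∧ g r = i0 ∧ r < m := by
      rcases lt_trichotomy a b with h1 | h1 | h1
      · rcases lt_trichotomy b c' with h2 | h2 | h2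
        · exact ⟨a, b, c', h1, h2, hAp.2, hBp.2, hCp.2, hCp.1⟩
        · exact absurd h2 hbc
        · rcases lt_trichotomy a c' with h3 | h3 | h3
          · exact ⟨a, c', b, h3, h2, hAp.2, hCp.2, hBp.2, hBp.1⟩
          · exact absurd h3 hac
          · exact ⟨c', a, b, h3, h1, hCp.2, hAp.2, hBp.2, hBp.1⟩
      · exact absurd h1 hab
      · rcases lt_trichotomy a c' with h2 | h2 | h2
        · exact ⟨b, a, c', h1, h2, hBp.2, hAp.2, hCp.2, hCp.1⟩
        · exact absurd h2 hac
        · rcases lt_trichotomy b c' with h3 | h3 | h3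
          · exact ⟨b, c', a, h3, h2, hBp.2, hCp.2, hAp.2, hAp.1⟩
          · exact absurd h3 hbc
          · exact ⟨c', b, a, h3, h1, hCp.2, hBp.2, hAp.2, hAp.1⟩
    obtain ⟨p, q, r, hpq, hqr, hgp, hgq, hgr, hrm⟩ := hsorted
    have hAB := hpair p q hpq (by omega)
    have hAC := hpair p r (by omega) (by omega)
    have hAY := hpair p m (by omega) (le_refl m)
    have hBC := hpair q r hqr (by omega)
    have hBY := hpair q m (by omega) (le_refl m)
    have hCY := hpair r m hrm (le_refl m)
    refine ⟨{v p, v q, v r, v m}, ?_, ?_⟩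
    · rw [Finset.card_insert_of_notMem, Finset.card_insert_of_notMem,
        Finset.card_insert_of_notMem, Finset.card_singleton]
      · simp only [Finset.mem_singleton]; exact hCY.1
      · simp only [Finset.mem_insert, Finset.mem_singleton]
        push_neg
        exact ⟨hBC.1, hBY.1⟩
      · simp only [Finset.mem_insert, Finset.mem_singleton]
        push_neg
        exact ⟨hAB.1, hAC.1, hAY.1⟩
    · have key : ∀ a' b', a' < b' → b' ≤ m → (a' = p ∨ a' = q ∨ a' = r) →
          c s(v a', v b') = i0 := by
        intro a' b' h hb hP
        have hcol := (hpair a' b' h hb).2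
        rcases hP with rfl | rfl | rfl
        · rw [hcol, hgp]
        · rw [hcol, hgq]
        · rw [hcol, hgr]
      have edge : ∀ a' b', (a' = p ∨ a' = q ∨ a' = r ∨ a' = m) →
          (b' = p ∨ b' = q ∨ b' = r ∨ b' = m) → v a' ≠ v b' →
          c s(v a', v b') = i0 := by
        intro a' b' hPa hPb hvne
        have ham : a' ≤ m := by rcases hPa with rfl | rfl | rfl | rfl <;> omega
        have hbm : b' ≤ m := by rcases hPb with rfl | rfl | rfl | rfl <;> omega
        rcases lt_trichotomy a' b' with h | h | h
        · apply key a' b' h hbm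
          rcases hPa with rfl | rfl | rfl | rfl
          · exact Or.inl rfl
          · exact Or.inr (Or.inl rfl)
          · exact Or.inr (Or.inr rfl)
          · exact absurd h (by omega)
        · exact absurd (congrArg v h) hvne
        · rw [Sym2.eq_swap]
          apply key b' a' h ham
          rcases hPb with rfl | rfl | rfl | rfl
          · exact Or.inl rfl
          · exact Or.inr (Or.inl rfl)
          · exact Or.inr (Or.inr rfl)
          · exact absurd h (by omega)
      have edge' : ∀ u w : Fin n, u ∈ ({v p, v q, v r, v m} : Finset (Fin n)) →
          w ∈ ({v p, v q, v r, v m} : Finset (Fin n)) → u ≠ w → c s(u, w) = i0 := by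
        intro u w hu hw hne
        simp only [Finset.mem_insert, Finset.mem_singleton] at hu hw
        obtain ⟨a', hPa, rfl⟩ : ∃ a', (a' = p ∨ a' = q ∨ a' = r ∨ a' = m) ∧ u = v a' := by
          rcases hu with rfl | rfl | rfl | rfl
          exacts [⟨p, Or.inl rfl, rfl⟩, ⟨q, Or.inr (Or.inl rfl), rfl⟩,
            ⟨r, Or.inr (Or.inr (Or.inl rfl)), rfl⟩, ⟨m, Or.inr (Or.inr (Or.inr rfl)), rfl⟩]
        obtain ⟨b', hPb, rfl⟩ : ∃ b', (b' = p ∨ b' = q ∨ b' = r ∨ b' = m) ∧ w = v b' := by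
          rcases hw with rfl | rfl | rfl | rfl
          exacts [⟨p, Or.inl rfl, rfl⟩, ⟨q, Or.inr (Or.inl rfl), rfl⟩,
            ⟨r, Or.inr (Or.inr (Or.inl rfl)), rfl⟩, ⟨m, Or.inr (Or.inr (Or.inr rfl)), rfl⟩]
        exact edge a' b' hPa hPb hne
      intro a1 ha1 b1 hb1 x1 hx1 y1 hy1 hab1 hxy1
      rw [edge' a1 b1 ha1 hb1 hab1, edge' x1 y1 hx1 hy1 hxy1]
end

section
/- For all positive integers k, t, s, every k-edge-coloring of the complete graph K_n with n ≥ s^(4kt) contains a monochromatic copy of K_t or a rainbow copy of K_s; that is, M(k,t,s) ≤ s^(4kt). -/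
open Finset

lemma cover_lemma {n k : ℕ} (c : Sym2 (Fin n) → Fin k) (R : Finset (Fin n)) (v w : Fin n)
    (hRv : IsRainbow c (insert v R)) (hRw : IsRainbow c (insert w R))
    (hbad : ¬ IsRainbow c (insert w (insert v R))) :
    (∃ p ∈ insert v R, ∃ q ∈ insert v R, p ≠ q ∧ c s(v, w) = c s(p, q)) ∨
    (∃ a ∈ R, c s(v, w) = c s(a, w)) ∨
    (∃ a ∈ R, ∃ b ∈ R, c s(a, w) = c s(b, v)) := by
  unfold IsRainbow at hbad
  push_neg at hbad
  obtain ⟨a, ha, b, hb, x, hx, y, hy, hab, hxy, hef, hc⟩ := hbad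
  have claim : ∀ b' x' y' : Fin n, b' ∈ insert w (insert v R) → x' ∈ insert w (insert v R) →
      y' ∈ insert w (insert v R) → w ≠ b' → x' ≠ y' → s(w, b') ≠ s(x', y') →
      c s(w, b') = c s(x', y') →
      (∃ p ∈ insert v R, ∃ q ∈ insert v R, p ≠ q ∧ c s(v, w) = c s(p, q)) ∨
      (∃ a ∈ R, c s(v, w) = c s(a, w)) ∨
      (∃ a ∈ R, ∃ b ∈ R, c s(a, w) = c s(b, v)) := by
    intro b' x' y' hb' hx' hy' hwb' hx'y' hef' hc'
    rcases Finset.mem_insert.1 hb' with heqb | hb''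
    · exact absurd heqb.symm hwb'
    rcases Finset.mem_insert.1 hb'' with heqb | hb'R
    · -- b' = v : edge e = s(w,v)
      rw [heqb] at hc' hef'
      rcases Finset.mem_insert.1 hx' with heqx | hx''
      · -- x' = w
        rw [heqx] at hc' hef' hx'y'
        rcases Finset.mem_insert.1 hy' with heqy | hy''
        · exact absurd heqy.symm hx'y'
        rcases Finset.mem_insert.1 hy'' with heqy | hy'R
        · rw [heqy] at hef'; exact absurd rfl hef'
        · refine Or.inr (Or.inl ⟨y', hy'R, ?_⟩)
          rw [show s(v, w) = s(w, v) from Sym2.eq_swap,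
            show s(y', w) = s(w, y') from Sym2.eq_swap]
          exact hc'
      · rcases Finset.mem_insert.1 hy' with heqy | hy''
        · -- y' = w
          rw [heqy] at hc' hef' hx'y'
          rcases Finset.mem_insert.1 hx'' with heqx | hx'R
          · rw [heqx] at hc' hef'; exact absurd Sym2.eq_swap hef'
          · refine Or.inr (Or.inl ⟨x', hx'R, ?_⟩)
            rw [show s(v, w) = s(w, v) from Sym2.eq_swap]
            exact hc'.trans (by rw [show s(x', w) = s(w, x') from Sym2.eq_swap])
        · -- x', y' ∈ insert v R
          refine Or.inl ⟨x', hx'', y', hy'', hx'y', ?_⟩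
          rw [show s(v, w) = s(w, v) from Sym2.eq_swap]
          exact hc'
    · -- b' ∈ R
      by_cases hx'v : x' = v
      · rw [hx'v] at hc' hef' hx'y'
        rcases Finset.mem_insert.1 hy' with heqy | hy''
        · -- y' = w
          rw [heqy] at hc' hef'
          refine Or.inr (Or.inl ⟨b', hb'R, ?_⟩)
          exact hc'.symm.trans (by rw [show s(w, b') = s(b', w) from Sym2.eq_swap])
        rcases Finset.mem_insert.1 hy'' with heqy | hy'R
        · exact absurd heqy.symm hx'y'
        · refine Or.inr (Or.inr ⟨b', hb'R, y', hy'R, ?_⟩)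
          rw [show s(b', w) = s(w, b') from Sym2.eq_swap,
            show s(y', v) = s(v, y') from Sym2.eq_swap]
          exact hc'
      · by_cases hy'v : y' = v
        · rw [hy'v] at hc' hef' hx'y'
          rcases Finset.mem_insert.1 hx' with heqx | hx''
          · -- x' = w
            rw [heqx] at hc' hef'
            refine Or.inr (Or.inl ⟨b', hb'R, ?_⟩)
            rw [show s(v, w) = s(w, v) from Sym2.eq_swap,
              show s(b', w) = s(w, b') from Sym2.eq_swap]
            exact hc'.symm
          rcases Finset.mem_insert.1 hx'' with heqx | hx'R
          · exact absurd heqx hx'v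
          · refine Or.inr (Or.inr ⟨b', hb'R, x', hx'R, ?_⟩)
            rw [show s(b', w) = s(w, b') from Sym2.eq_swap]
            exact hc'
        · -- x', y' ∈ insert w R
          have hx'' : x' ∈ insert w R := by
            rcases Finset.mem_insert.1 hx' with heqx | hx''
            · rw [heqx]; exact Finset.mem_insert_self _ _
            · rcases Finset.mem_insert.1 hx'' with heqx | h
              · exact absurd heqx hx'v
              · exact Finset.mem_insert_of_mem h
          have hy'' : y' ∈ insert w R := by
            rcases Finset.mem_insert.1 hy' with heqy | hy''
            · rw [heqy]; exact Finset.mem_insert_self _ _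
            · rcases Finset.mem_insert.1 hy'' with heqy | h
              · exact absurd heqy hy'v
              · exact Finset.mem_insert_of_mem h
          exact absurd hc' (hRw w (Finset.mem_insert_self _ _) b'
            (Finset.mem_insert_of_mem hb'R) x' hx'' y' hy'' hwb' hx'y' hef')
  by_cases haw : a = w
  · rw [haw] at hab hef hc
    exact claim b x y hb hx hy hab hxy hef hc
  by_cases hbw : b = w
  · rw [hbw] at hab hef hc
    refine claim a x y ha hx hy (Ne.symm hab) hxy ?_ ?_
    · rw [show s(w, a) = s(a, w) from Sym2.eq_swap]; exact hef
    · rw [show s(w, a) = s(a, w) from Sym2.eq_swap]; exact hc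
  by_cases hxw : x = w
  · rw [hxw] at hxy hef hc
    exact claim y a b hy ha hb hxy hab (Ne.symm hef) hc.symm
  by_cases hyw : y = w
  · rw [hyw] at hxy hef hc
    refine claim x a b hx ha hb (Ne.symm hxy) hab ?_ ?_
    · rw [show s(w, x) = s(x, w) from Sym2.eq_swap]; exact Ne.symm hef
    · rw [show s(w, x) = s(x, w) from Sym2.eq_swap]; exact hc.symm
  · have ha' : a ∈ insert v R := (Finset.mem_insert.1 ha).resolve_left haw
    have hb' : b ∈ insert v R := (Finset.mem_insert.1 hb).resolve_left hbw
    have hx' : x ∈ insert v R := (Finset.mem_insert.1 hx).resolve_left hxw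
    have hy' : y ∈ insert v R := (Finset.mem_insert.1 hy).resolve_left hyw
    exact absurd hc (hRv a ha' b hb' x hx' y hy' hab hxy hef)

lemma rainbow_of_card_le_two {V C : Type*} [DecidableEq V] (c : Sym2 V → C) (S : Finset V)
    (h : S.card ≤ 2) : IsRainbow c S := by
  intro a ha b hb x hx y hy hab hxy hef
  exfalso
  apply hef
  have hsub : ({a, b} : Finset V) ⊆ S := by
    intro p hp
    rcases Finset.mem_insert.1 hp with heq | hp
    · rw [heq]; exact ha
    · rw [Finset.mem_singleton.1 hp]; exact hb
  have hS : S = {a, b} :=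
    (Finset.eq_of_subset_of_card_le hsub (by rw [Finset.card_pair hab]; exact h)).symm
  rw [hS] at hx hy
  have hx2 : x = a ∨ x = b := by
    rcases Finset.mem_insert.1 hx with heq | hx
    · exact Or.inl heq
    · exact Or.inr (Finset.mem_singleton.1 hx)
  have hy2 : y = a ∨ y = b := by
    rcases Finset.mem_insert.1 hy with heq | hy
    · exact Or.inl heq
    · exact Or.inr (Finset.mem_singleton.1 hy)
  rcases hx2 with heqx | heqx <;> rcases hy2 with heqy | heqy <;>
    rw [heqx, heqy] at hxy ⊢ <;>
    first
    | exact absurd rfl hxy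
    | rfl
    | exact Sym2.eq_swap

lemma exists_rainbow {n k : ℕ} (c : Sym2 (Fin n) → Fin k) (s E : ℕ) (hs : 3 ≤ s)
    (W : Finset (Fin n))
    (hE : ∀ v ∈ W, ∀ i : Fin k, (W.filter fun y => y ≠ v ∧ c s(v, y) = i).card ≤ E)
    (hW : s ^ 4 * (E + 1) ≤ W.card) :
    ∃ S : Finset (Fin n), S.card = s ∧ IsRainbow c S := by
  have key : ∀ r, r ≤ s → ∃ R W' : Finset (Fin n), R ⊆ W ∧ W' ⊆ W ∧ (∀ x ∈ R, x ∉ W') ∧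
      R.card = r ∧ W.card ≤ W'.card + r * (1 + 2 * s ^ 2 * E) ∧ IsRainbow c R ∧
      ∀ w ∈ W', IsRainbow c (insert w R) := by
    intro r
    induction r with
    | zero =>
      intro _
      refine ⟨∅, W, Finset.empty_subset _, Finset.Subset.refl _, by simp, Finset.card_empty,
        by simp, ?_, fun w _ => ?_⟩
      · intro a ha; exact absurd ha (Finset.notMem_empty a)
      · exact rainbow_of_card_le_two c _ (by simp)
    | succ r IH =>
      intro hr1
      obtain ⟨R, W', hRW, hW'W, hdisj, hcard, hsize, hrb, hins⟩ :=
        IH (le_trans (Nat.le_succ r) hr1)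
      -- W' is nonempty
      have hstep : r * (1 + 2 * s ^ 2 * E) + 1 ≤ s ^ 4 * (E + 1) := by
        have hs1 : 1 ≤ s := by omega
        have hss : s ≤ s ^ 4 := by
          calc s = s ^ 1 := (pow_one s).symm
            _ ≤ s ^ 4 := Nat.pow_le_pow_right hs1 (by omega)
        have h2s : 2 * s ^ 3 ≤ s ^ 4 := by
          have h4 : s ^ 4 = s * s ^ 3 := by ring
          rw [h4]
          exact Nat.mul_le_mul_right _ (by omega)
        calc r * (1 + 2 * s ^ 2 * E) + 1 ≤ (r + 1) * (1 + 2 * s ^ 2 * E) := by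
              have : r * (1 + 2 * s ^ 2 * E) + 1 ≤ r * (1 + 2 * s ^ 2 * E) + (1 + 2 * s ^ 2 * E) :=
                Nat.add_le_add_left (Nat.le_add_right 1 _) _
              calc r * (1 + 2 * s ^ 2 * E) + 1
                  ≤ r * (1 + 2 * s ^ 2 * E) + (1 + 2 * s ^ 2 * E) := this
                _ = (r + 1) * (1 + 2 * s ^ 2 * E) := by ring
          _ ≤ s * (1 + 2 * s ^ 2 * E) := Nat.mul_le_mul_right _ hr1
          _ = s + (2 * s ^ 3) * E := by ring
          _ ≤ s ^ 4 + s ^ 4 * E := Nat.add_le_add hss (Nat.mul_le_mul_right _ h2s)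
          _ = s ^ 4 * (E + 1) := by ring
      have hW'pos : 1 ≤ W'.card := by omega
      -- choose pivot v minimizing the B2 count
      have hmin : ∃ v ∈ W',
          ((W'.filter fun w => w ≠ v ∧ ∃ a ∈ R, c s(v, w) = c s(a, w))).card ≤ r * E := by
        by_contra hcon
        push_neg at hcon
        have hsum1 : W'.card * (r * E) + W'.card ≤
            ∑ u ∈ W', ((W'.filter fun w => w ≠ u ∧ ∃ a ∈ R, c s(u, w) = c s(a, w))).card := by
          calc W'.card * (r * E) + W'.card = ∑ _u ∈ W', (r * E + 1) := by
                rw [Finset.sum_const, smul_eq_mul]; ring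
            _ ≤ _ := Finset.sum_le_sum fun u hu => hcon u hu
        have hsum2 : ∑ u ∈ W',
            ((W'.filter fun w => w ≠ u ∧ ∃ a ∈ R, c s(u, w) = c s(a, w))).card ≤
            W'.card * (r * E) := by
          have step1 : ∀ u ∈ W',
              ((W'.filter fun w => w ≠ u ∧ ∃ a ∈ R, c s(u, w) = c s(a, w))).card ≤
              ∑ a ∈ R, ((W'.filter fun w => w ≠ u ∧ c s(u, w) = c s(a, w))).card := by
            intro u _
            refine le_trans (Finset.card_le_card ?_) (Finset.card_biUnion_le)
            intro w hw
            simp only [Finset.mem_filter, Finset.mem_biUnion] at hw ⊢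
            obtain ⟨hwW, hwu, a, haR, hP⟩ := hw
            exact ⟨a, haR, hwW, hwu, hP⟩
          calc ∑ u ∈ W', ((W'.filter fun w => w ≠ u ∧ ∃ a ∈ R, c s(u, w) = c s(a, w))).card
              ≤ ∑ u ∈ W', ∑ a ∈ R, ((W'.filter fun w => w ≠ u ∧ c s(u, w) = c s(a, w))).card :=
                Finset.sum_le_sum step1
            _ = ∑ a ∈ R, ∑ u ∈ W', ((W'.filter fun w => w ≠ u ∧ c s(u, w) = c s(a, w))).card :=
                Finset.sum_comm
            _ ≤ ∑ _a ∈ R, (W'.card * E) := by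
                refine Finset.sum_le_sum fun a _ => ?_
                have swap : ∑ u ∈ W', ((W'.filter fun w => w ≠ u ∧ c s(u, w) = c s(a, w))).card
                    = ∑ w ∈ W', ((W'.filter fun u => w ≠ u ∧ c s(u, w) = c s(a, w))).card := by
                  simp only [Finset.card_filter]
                  exact Finset.sum_comm
                rw [swap]
                calc ∑ w ∈ W', ((W'.filter fun u => w ≠ u ∧ c s(u, w) = c s(a, w))).card
                    ≤ ∑ _w ∈ W', E := by
                      refine Finset.sum_le_sum fun w hw => ?_
                      refine le_trans (Finset.card_le_card ?_) (hE w (hW'W hw) (c s(a, w)))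
                      intro u hu
                      simp only [Finset.mem_filter] at hu ⊢
                      refine ⟨hW'W hu.1, Ne.symm hu.2.1, ?_⟩
                      rw [show s(w, u) = s(u, w) from Sym2.eq_swap]
                      exact hu.2.2
                  _ = W'.card * E := by rw [Finset.sum_const, smul_eq_mul]
            _ = R.card * (W'.card * E) := by rw [Finset.sum_const, smul_eq_mul]
            _ = W'.card * (r * E) := by rw [hcard]; ring
        omega
      obtain ⟨v, hvW', hB2⟩ := hmin
      have hvW : v ∈ W := hW'W hvW'
      have hvR : v ∉ R := fun h => hdisj v h hvW'
      have hcardRp : (insert v R).card = r + 1 := by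
        rw [Finset.card_insert_of_notMem hvR, hcard]
      set W2 := W'.erase v with hW2def
      set Wp := W2.filter (fun w => IsRainbow c (insert w (insert v R))) with hWpdef
      set bad := W2.filter (fun w => ¬ IsRainbow c (insert w (insert v R))) with hbaddef
      have hsplit : Wp.card + bad.card = W2.card := by
        rw [hWpdef, hbaddef]
        exact Finset.card_filter_add_card_filter_not _
      have hW2card : W2.card = W'.card - 1 := Finset.card_erase_of_mem hvW'
      -- bound bad
      set B1 := (insert v R).biUnion (fun p => (insert v R).biUnion fun q =>
        W.filter (fun w => w ≠ v ∧ c s(v, w) = c s(p, q))) with hB1def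
      set B3 := R.biUnion (fun a0 => R.biUnion fun b0 =>
        W.filter (fun w => w ≠ a0 ∧ c s(a0, w) = c s(b0, v))) with hB3def
      set B2 := W'.filter (fun w => w ≠ v ∧ ∃ a ∈ R, c s(v, w) = c s(a, w)) with hB2def
      have hcover : bad ⊆ B1 ∪ B2 ∪ B3 := by
        intro w hw
        rw [hbaddef, Finset.mem_filter] at hw
        obtain ⟨hwW2, hwbad⟩ := hw
        have hwW' : w ∈ W' := Finset.mem_of_mem_erase hwW2
        have hwv : w ≠ v := Finset.ne_of_mem_erase hwW2
        rcases cover_lemma c R v w (hins v hvW') (hins w hwW') hwbad with h1 | h2 | h3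
        · obtain ⟨p, hp, q, hq, hpq, hcol⟩ := h1
          refine Finset.mem_union_left _ (Finset.mem_union_left _ ?_)
          rw [hB1def]
          simp only [Finset.mem_biUnion, Finset.mem_filter]
          exact ⟨p, hp, q, hq, hW'W hwW', hwv, hcol⟩
        · obtain ⟨a, haR, hcol⟩ := h2
          refine Finset.mem_union_left _ (Finset.mem_union_right _ ?_)
          rw [hB2def]
          simp only [Finset.mem_filter]
          exact ⟨hwW', hwv, a, haR, hcol⟩
        · obtain ⟨a0, ha0, b0, hb0, hcol⟩ := h3
          refine Finset.mem_union_right _ ?_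
          rw [hB3def]
          simp only [Finset.mem_biUnion, Finset.mem_filter]
          have hwa0 : w ≠ a0 := fun h => hdisj a0 ha0 (h ▸ hwW')
          exact ⟨a0, ha0, b0, hb0, hW'W hwW', hwa0, hcol⟩
      have hB1card : B1.card ≤ (r + 1) * ((r + 1) * E) := by
        rw [hB1def]
        refine le_trans Finset.card_biUnion_le ?_
        calc ∑ p ∈ insert v R, ((insert v R).biUnion fun q =>
              W.filter (fun w => w ≠ v ∧ c s(v, w) = c s(p, q))).card
            ≤ ∑ p ∈ insert v R, ((r + 1) * E) := by
              refine Finset.sum_le_sum fun p _ => ?_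
              refine le_trans Finset.card_biUnion_le ?_
              calc ∑ q ∈ insert v R, (W.filter (fun w => w ≠ v ∧ c s(v, w) = c s(p, q))).card
                  ≤ ∑ _q ∈ insert v R, E :=
                    Finset.sum_le_sum fun q _ => hE v hvW (c s(p, q))
                _ = (r + 1) * E := by rw [Finset.sum_const, smul_eq_mul, hcardRp]
          _ = (r + 1) * ((r + 1) * E) := by rw [Finset.sum_const, smul_eq_mul, hcardRp]
      have hB3card : B3.card ≤ r * (r * E) := by
        rw [hB3def]
        refine le_trans Finset.card_biUnion_le ?_
        calc ∑ a0 ∈ R, (R.biUnion fun b0 =>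
              W.filter (fun w => w ≠ a0 ∧ c s(a0, w) = c s(b0, v))).card
            ≤ ∑ a0 ∈ R, (r * E) := by
              refine Finset.sum_le_sum fun a0 ha0 => ?_
              refine le_trans Finset.card_biUnion_le ?_
              calc ∑ b0 ∈ R, (W.filter (fun w => w ≠ a0 ∧ c s(a0, w) = c s(b0, v))).card
                  ≤ ∑ _b0 ∈ R, E :=
                    Finset.sum_le_sum fun b0 _ => hE a0 (hRW ha0) (c s(b0, v))
                _ = r * E := by rw [Finset.sum_const, smul_eq_mul, hcard]
          _ = r * (r * E) := by rw [Finset.sum_const, smul_eq_mul, hcard]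
      have hbadcard : bad.card ≤ 2 * s ^ 2 * E := by
        have h1 : bad.card ≤ B1.card + B2.card + B3.card := by
          refine le_trans (Finset.card_le_card hcover) ?_
          refine le_trans (Finset.card_union_le _ _) ?_
          exact Nat.add_le_add_right (Finset.card_union_le _ _) _
        have h2 : (r + 1) * ((r + 1) * E) + r * E + r * (r * E) ≤ 2 * s ^ 2 * E := by
          have hA : (r + 1) * (r + 1) ≤ s * s := Nat.mul_le_mul hr1 hr1
          have hB : r * (r + 1) ≤ s * s := Nat.mul_le_mul (by omega) hr1
          calc (r + 1) * ((r + 1) * E) + r * E + r * (r * E)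
              = ((r + 1) * (r + 1)) * E + (r * (r + 1)) * E := by ring
            _ ≤ (s * s) * E + (s * s) * E :=
                Nat.add_le_add (Nat.mul_le_mul_right _ hA) (Nat.mul_le_mul_right _ hB)
            _ = 2 * s ^ 2 * E := by ring
        omega
      -- assemble
      refine ⟨insert v R, Wp, ?_, ?_, ?_, hcardRp, ?_, hins v hvW', ?_⟩
      · exact Finset.insert_subset hvW hRW
      · exact fun w hw => hW'W (Finset.mem_of_mem_erase (Finset.mem_of_mem_filter w hw))
      · intro x hx
        rcases Finset.mem_insert.1 hx with rfl | hxR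
        · intro hxWp
          exact absurd (Finset.mem_of_mem_filter x hxWp) (Finset.notMem_erase x W')
        · intro hxWp
          exact hdisj x hxR (Finset.mem_of_mem_erase (Finset.mem_of_mem_filter x hxWp))
      · -- size invariant
        have : W'.card ≤ Wp.card + (1 + 2 * s ^ 2 * E) := by omega
        calc W.card ≤ W'.card + r * (1 + 2 * s ^ 2 * E) := hsize
          _ ≤ (Wp.card + (1 + 2 * s ^ 2 * E)) + r * (1 + 2 * s ^ 2 * E) := by omega
          _ = Wp.card + (r + 1) * (1 + 2 * s ^ 2 * E) := by ring
      · intro w hw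
        rw [hWpdef, Finset.mem_filter] at hw
        exact hw.2
  obtain ⟨R, W', _, _, _, hcard, _, hrb, _⟩ := key s le_rfl
  exact ⟨R, hcard, hrb⟩

lemma main_ind {n k : ℕ} (c : Sym2 (Fin n) → Fin k) (s t : ℕ) (hs : 3 ≤ s) (hk : 0 < k)
    (ht : 2 ≤ t) :
    ∀ (j : ℕ) (W : Finset (Fin n)) (P : Fin k → Finset (Fin n)),
      s ^ (4 * j) ≤ W.card →
      (∀ i, ∀ p ∈ P i, p ∉ W) →
      (∀ i, ∀ p ∈ P i, ∀ w ∈ W, c s(p, w) = i) →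
      (∀ i, ∀ p ∈ P i, ∀ q ∈ P i, p ≠ q → c s(p, q) = i) →
      k * (t - 1) ≤ j + ∑ i, (P i).card →
      (∃ S : Finset (Fin n), S.card = t ∧ IsMonochromatic c S) ∨
      (∃ S : Finset (Fin n), S.card = s ∧ IsRainbow c S) := by
  intro j
  induction j with
  | zero =>
    intro W P hWcard hPW hPWc hPP hcount
    have hex : ∃ i : Fin k, t - 1 ≤ (P i).card := by
      by_contra hcon
      push_neg at hcon
      have hsum : ∑ i, (P i).card ≤ ∑ _i : Fin k, (t - 2) :=
        Finset.sum_le_sum (fun i _ => by have := hcon i; omega)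
      rw [Finset.sum_const, Finset.card_univ, Fintype.card_fin, smul_eq_mul] at hsum
      have hkt : k * (t - 1) = k * (t - 2) + k := by
        have h1 : t - 1 = (t - 2) + 1 := by omega
        rw [h1, Nat.mul_add, Nat.mul_one]
      omega
    obtain ⟨i, hi⟩ := hex
    obtain ⟨T, hTsub, hTcard⟩ := Finset.exists_subset_card_eq hi
    have hWne : W.Nonempty := by
      rw [← Finset.card_pos]
      have h1 : s ^ (4 * 0) = 1 := by norm_num
      omega
    obtain ⟨w, hw⟩ := hWne
    have hwT : w ∉ T := fun h => hPW i w (hTsub h) hw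
    refine Or.inl ⟨insert w T, ?_, ?_⟩
    · rw [Finset.card_insert_of_notMem hwT, hTcard]; omega
    · have hall : ∀ a ∈ insert w T, ∀ b ∈ insert w T, a ≠ b → c s(a, b) = i := by
        intro a ha b hb hab
        rcases Finset.mem_insert.1 ha with heqa | haT
        · rcases Finset.mem_insert.1 hb with heqb | hbT
          · rw [heqa, heqb] at hab; exact absurd rfl hab
          · rw [heqa, show s(w, b) = s(b, w) from Sym2.eq_swap]
            exact hPWc i b (hTsub hbT) w hw
        · rcases Finset.mem_insert.1 hb with heqb | hbT
          · rw [heqb]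
            exact hPWc i a (hTsub haT) w hw
          · exact hPP i a (hTsub haT) b (hTsub hbT) hab
      intro a ha b hb x hx y hy hab hxy
      rw [hall a ha b hb hab, hall x hx y hy hxy]
  | succ j IH =>
    intro W P hWcard hPW hPWc hPP hcount
    by_cases hbig : ∃ i : Fin k, ∃ v ∈ W,
        s ^ (4 * j) ≤ (W.filter fun y => y ≠ v ∧ c s(v, y) = i).card
    · obtain ⟨i, v, hvW, hclass⟩ := hbig
      set W' := W.filter (fun y => y ≠ v ∧ c s(v, y) = i) with hW'def
      set P' := Function.update P i (insert v (P i)) with hP'def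
      have hW'W : W' ⊆ W := Finset.filter_subset _ _
      have hvPi : v ∉ P i := fun h => hPW i v h hvW
      have hmemW' : ∀ w ∈ W', w ≠ v ∧ c s(v, w) = i := by
        intro w hw
        rw [hW'def, Finset.mem_filter] at hw
        exact hw.2
      apply IH W' P' hclass ?_ ?_ ?_ ?_
      · intro i' p hp
        by_cases hii : i' = i
        · rw [hii, hP'def, Function.update_self] at hp
          rcases Finset.mem_insert.1 hp with heq | hpP
          · rw [heq]
            intro hvW'
            exact absurd rfl (hmemW' v hvW').1
          · exact fun h => hPW i p hpP (hW'W h)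
        · rw [hP'def, Function.update_of_ne hii] at hp
          exact fun h => hPW i' p hp (hW'W h)
      · intro i' p hp w hw
        by_cases hii : i' = i
        · subst hii
          rw [hP'def, Function.update_self] at hp
          rcases Finset.mem_insert.1 hp with heq | hpP
          · rw [heq]
            exact (hmemW' w hw).2
          · exact hPWc i' p hpP w (hW'W hw)
        · rw [hP'def, Function.update_of_ne hii] at hp
          exact hPWc i' p hp w (hW'W hw)
      · intro i' p hp q hq hpq
        by_cases hii : i' = i
        · subst hii
          rw [hP'def, Function.update_self] at hp hq
          rcases Finset.mem_insert.1 hp with heqp | hpP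
          · rcases Finset.mem_insert.1 hq with heqq | hqP
            · rw [heqp, heqq] at hpq; exact absurd rfl hpq
            · rw [heqp, show s(v, q) = s(q, v) from Sym2.eq_swap]
              exact hPWc i' q hqP v hvW
          · rcases Finset.mem_insert.1 hq with heqq | hqP
            · rw [heqq]
              exact hPWc i' p hpP v hvW
            · exact hPP i' p hpP q hqP hpq
        · rw [hP'def, Function.update_of_ne hii] at hp hq
          exact hPP i' p hp q hq hpq
      · have hsum : ∑ i', (P' i').card = (∑ i', (P i').card) + 1 := by
          have e1 : ∑ i', (P' i').card = (P' i).card + ∑ i' ∈ univ.erase i, (P' i').card :=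
            (Finset.add_sum_erase _ _ (Finset.mem_univ i)).symm
          have e2 : ∑ i', (P i').card = (P i).card + ∑ i' ∈ univ.erase i, (P i').card :=
            (Finset.add_sum_erase _ _ (Finset.mem_univ i)).symm
          have e3 : ∑ i' ∈ univ.erase i, (P' i').card = ∑ i' ∈ univ.erase i, (P i').card := by
            refine Finset.sum_congr rfl fun i' hi' => ?_
            rw [hP'def, Function.update_of_ne (Finset.ne_of_mem_erase hi')]
          have e4 : (P' i).card = (P i).card + 1 := by
            rw [hP'def, Function.update_self, Finset.card_insert_of_notMem hvPi]
          omega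
        omega
    · push_neg at hbig
      have hs0 : 1 ≤ s ^ (4 * j) := Nat.one_le_pow _ _ (by omega)
      refine Or.inr (exists_rainbow c s (s ^ (4 * j) - 1) hs W ?_ ?_)
      · intro v hv i
        have := hbig i v hv
        omega
      · have h1 : s ^ (4 * j) - 1 + 1 = s ^ (4 * j) := by omega
        rw [h1]
        have h2 : s ^ 4 * s ^ (4 * j) = s ^ (4 * (j + 1)) := by
          rw [← pow_add]
          congr 1
          ring
        rw [h2]
        exact hWcard

/-- **Proposition 7.** For all positive integers `k, t, s`, every `k`-edge-coloring of
`K_n` with `n ≥ s^(4kt)` contains a monochromatic `K_t` or a rainbow `K_s`; that is,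
`M(k,t,s) ≤ s^(4kt)`. -/
theorem mono_or_rainbow
    (k t s n : ℕ) (hk : 0 < k) (ht : 0 < t) (hs : 0 < s)
    (hn : s ^ (4 * k * t) ≤ n) (c : Sym2 (Fin n) → Fin k) :
    (∃ S : Finset (Fin n), S.card = t ∧ IsMonochromatic c S) ∨
    (∃ S : Finset (Fin n), S.card = s ∧ IsRainbow c S) := by
  rcases Nat.lt_or_ge s 3 with hs3 | hs3
  · -- s = 1 or s = 2 : trivial rainbow
    have hkt : 1 ≤ 4 * k * t := by
      have := Nat.mul_le_mul (Nat.mul_le_mul (le_refl 4) hk) ht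
      omega
    interval_cases s
    · have hn1 : 1 ≤ n := by
        have : (1 : ℕ) ^ (4 * k * t) = 1 := one_pow _
        omega
      refine Or.inr ⟨{⟨0, by omega⟩}, Finset.card_singleton _, ?_⟩
      exact rainbow_of_card_le_two c _ (by simp)
    · have hn2 : 2 ≤ n := by
        have h2 : (2 : ℕ) = 2 ^ 1 := by norm_num
        have := Nat.pow_le_pow_right (by norm_num : 1 ≤ 2) hkt
        omega
      have hne : (⟨0, by omega⟩ : Fin n) ≠ ⟨1, by omega⟩ := by
        intro h
        have := Fin.mk.injEq 0 (by omega : 0 < n) 1 (by omega : 1 < n) ▸ h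
        simp at h
      refine Or.inr ⟨{⟨0, by omega⟩, ⟨1, by omega⟩}, ?_, ?_⟩
      · rw [Finset.card_insert_of_notMem (by simpa using hne), Finset.card_singleton]
      · exact rainbow_of_card_le_two c _ (by
          exact le_of_eq (by rw [Finset.card_insert_of_notMem (by simpa using hne),
            Finset.card_singleton]))
  · rcases Nat.lt_or_ge t 2 with ht2 | ht2
    · -- t = 1 : trivial monochromatic
      have hn1 : 1 ≤ n := le_trans (Nat.one_le_pow _ _ (by omega)) hn
      have ht1 : t = 1 := by omega
      refine Or.inl ⟨{⟨0, by omega⟩}, by rw [Finset.card_singleton, ht1], ?_⟩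
      intro a ha b hb x hx y hy hab hxy
      rw [Finset.mem_singleton] at ha hb
      rw [ha, hb] at hab
      exact absurd rfl hab
    · have hmain := main_ind c s t hs3 hk ht2 (k * (t - 1)) Finset.univ (fun _ => ∅)
        ?_ (by simp) (by simp) (by simp) (by simp)
      · exact hmain
      · rw [Finset.card_univ, Fintype.card_fin]
        refine le_trans (le_trans ?_ hn) (le_refl n)
        refine Nat.pow_le_pow_right (by omega) ?_
        have h1 : k * (t - 1) ≤ k * t := Nat.mul_le_mul_left k (Nat.sub_le t 1)
        calc 4 * (k * (t - 1)) ≤ 4 * (k * t) := Nat.mul_le_mul_left 4 h1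
          _ = 4 * k * t := by ring
end

section
/- For all positive integers k and t with k even and t ≥ 3, M(k,t,3) > 2^(kt/4); that is, there exists a k-edge-coloring of the complete graph on 2^(kt/4) vertices containing no monochromatic copy of K_t and no rainbow triangle. -/
open Finset

open Finset Function in
lemma card_edges_in (m : ℕ) (S : Finset (Fin m)) :
    ((S.sym2).filter (fun e => ¬ e.IsDiag)).card = S.card.choose 2 := by
  classical
  have himg : (S.sym2).filter (fun e => ¬ e.IsDiag) =
      (univ.filter (fun e : Sym2 ↥S => ¬ e.IsDiag)).image (Sym2.map Subtype.val) := by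
    ext e
    simp only [mem_filter, mem_image]
    constructor
    · rintro ⟨he, hd⟩
      induction e using Sym2.ind with
      | _ x y =>
        rw [Finset.mk_mem_sym2_iff] at he
        refine ⟨s(⟨x, he.1⟩, ⟨y, he.2⟩), ?_, ?_⟩
        · simp only [mem_filter, mem_univ, true_and]
          intro h
          rw [Sym2.mk_isDiag_iff] at h
          exact hd (by rw [Sym2.mk_isDiag_iff]; exact congrArg Subtype.val h)
        · rfl
    · rintro ⟨e', ⟨-, hd⟩, rfl⟩
      induction e' using Sym2.ind with
      | _ x y =>
        constructor
        · rw [Sym2.map_pair_eq, Finset.mk_mem_sym2_iff]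
          exact ⟨x.2, y.2⟩
        · rw [Sym2.map_pair_eq, Sym2.mk_isDiag_iff]
          intro h
          exact hd (by rw [Sym2.mk_isDiag_iff]; exact Subtype.ext h)
  rw [himg, Finset.card_image_of_injective _ (Sym2.map.injective Subtype.val_injective)]
  have := Sym2.card_subtype_not_diag (α := ↥S)
  rw [← Fintype.card_coe S, ← this]
  rw [← Fintype.card_subtype]

open Finset Function in
lemma monoCard_le (m t : ℕ) (ht2 : 2 ≤ t) (S : Finset (Fin m)) (hS : S.card = t) :
    (univ.filter (fun f : Sym2 (Fin m) → Fin 2 => IsMonochromatic f S)).card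
      * 2 ^ (t.choose 2)
      ≤ 2 * 2 ^ (Fintype.card (Sym2 (Fin m))) := by
  classical
  set A : Finset (Sym2 (Fin m)) := (S.sym2).filter (fun e => ¬ e.IsDiag) with hA
  obtain ⟨a₀, ha₀, b₀, hb₀, hab₀⟩ := Finset.one_lt_card.1 (by omega : 1 < S.card)
  have he₀ : s(a₀, b₀) ∈ A := by
    rw [hA, mem_filter, Finset.mk_mem_sym2_iff, Sym2.mk_isDiag_iff]
    exact ⟨⟨ha₀, hb₀⟩, hab₀⟩
  set B := univ.filter (fun f : Sym2 (Fin m) → Fin 2 => IsMonochromatic f S) with hB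
  have hmemA : ∀ e ∈ A, ∀ f ∈ B, f e = f s(a₀, b₀) := by
    intro e he f hf
    induction e using Sym2.ind with
    | _ x y =>
      rw [hA, mem_filter, Finset.mk_mem_sym2_iff, Sym2.mk_isDiag_iff] at he
      rw [hB, mem_filter] at hf
      exact hf.2 x he.1.1 y he.1.2 a₀ ha₀ b₀ hb₀ he.2 hab₀
  have key : Fintype.card (↥B × (↥A → Fin 2)) ≤
      Fintype.card (Fin 2 × (Sym2 (Fin m) → Fin 2)) := by
    apply Fintype.card_le_of_injective
      (fun p => (p.1.1 s(a₀, b₀), fun e => if h : e ∈ A then p.2 ⟨e, h⟩ else p.1.1 e))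
    rintro ⟨⟨f, hf⟩, g⟩ ⟨⟨f', hf'⟩, g'⟩ heq
    rw [Prod.mk.injEq] at heq
    obtain ⟨h1, h2⟩ := heq
    simp only at h1 h2
    have hg : g = g' := by
      funext e
      have := congrFun h2 e.1
      rwa [dif_pos e.2, dif_pos e.2] at this
    have hff : f = f' := by
      funext e
      by_cases he : e ∈ A
      · rw [hmemA e he f hf, hmemA e he f' hf', h1]
      · have := congrFun h2 e
        rwa [dif_neg he, dif_neg he] at this
    simp [hg, hff]
  have hAcard : A.card = t.choose 2 := by rw [hA, card_edges_in, hS]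
  simpa [Fintype.card_coe, Fintype.card_fun, hAcard, mul_comm] using key

open Finset Function in
lemma counting (m t : ℕ) (ht2 : 2 ≤ t) (h : 2 * m.choose t < 2 ^ (t.choose 2)) :
    ∃ f : Sym2 (Fin m) → Fin 2,
      ∀ S : Finset (Fin m), S.card = t → ¬ IsMonochromatic f S := by
  classical
  by_contra hcon
  push_neg at hcon
  set E := Fintype.card (Sym2 (Fin m)) with hE
  have hbad : (univ : Finset (Sym2 (Fin m) → Fin 2)) ⊆
      (powersetCard t (univ : Finset (Fin m))).biUnion
        (fun S => univ.filter (fun f => IsMonochromatic f S)) := by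
    intro f _
    obtain ⟨S, hSc, hSm⟩ := hcon f
    rw [mem_biUnion]
    exact ⟨S, by rw [mem_powersetCard_univ]; exact hSc, by simpa using hSm⟩
  have h1 : (2:ℕ) ^ E * 2 ^ (t.choose 2) ≤ m.choose t * (2 * 2 ^ E) := by
    calc (2:ℕ) ^ E * 2 ^ (t.choose 2)
        = (univ : Finset (Sym2 (Fin m) → Fin 2)).card * 2 ^ (t.choose 2) := by
          rw [card_univ, Fintype.card_fun]; rfl
      _ ≤ ((powersetCard t (univ : Finset (Fin m))).biUnion
            (fun S => univ.filter (fun f => IsMonochromatic f S))).card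
            * 2 ^ (t.choose 2) := by
          exact Nat.mul_le_mul_right _ (Finset.card_le_card hbad)
      _ ≤ (∑ S ∈ powersetCard t (univ : Finset (Fin m)),
            (univ.filter (fun f : Sym2 (Fin m) → Fin 2 => IsMonochromatic f S)).card)
            * 2 ^ (t.choose 2) := by
          exact Nat.mul_le_mul_right _ (Finset.card_biUnion_le)
      _ = ∑ S ∈ powersetCard t (univ : Finset (Fin m)),
            (univ.filter (fun f : Sym2 (Fin m) → Fin 2 => IsMonochromatic f S)).card
            * 2 ^ (t.choose 2) := by rw [Finset.sum_mul]
      _ ≤ ∑ _S ∈ powersetCard t (univ : Finset (Fin m)), 2 * 2 ^ E := by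
          apply Finset.sum_le_sum
          intro S hSmem
          exact monoCard_le m t ht2 S (by rwa [mem_powersetCard_univ] at hSmem)
      _ = m.choose t * (2 * 2 ^ E) := by
          rw [Finset.sum_const, card_powersetCard, card_univ, Fintype.card_fin,
            smul_eq_mul]
  have h2 : m.choose t * (2 * 2 ^ E) < 2 ^ E * 2 ^ (t.choose 2) := by
    have := Nat.mul_lt_mul_of_lt_of_le h (le_refl ((2:ℕ) ^ E)) (by positivity)
    calc m.choose t * (2 * 2 ^ E) = 2 * m.choose t * 2 ^ E := by ring
      _ < 2 ^ (t.choose 2) * 2 ^ E := this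
      _ = 2 ^ E * 2 ^ (t.choose 2) := by ring
  omega

lemma two_pow_lt_fact (t : ℕ) (ht : 6 ≤ t) : 2 ^ (t + 1) < t.factorial := by
  induction t with
  | zero => omega
  | succ n ih =>
    rcases Nat.lt_or_ge n 6 with h | h
    · interval_cases n <;> simp [Nat.factorial] <;> omega
    · have h1 := ih h
      rw [Nat.factorial_succ, pow_succ]
      calc 2 ^ (n+1) * 2 ≤ 2 ^ (n+1) * (n+1) := by
            apply Nat.mul_le_mul_left; omega
        _ < n.factorial * (n+1) := (Nat.mul_lt_mul_right (by omega)).2 h1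
        _ = (n+1) * n.factorial := by ring

lemma choose_bound (t : ℕ) (ht : 4 ≤ t) :
    2 * (2 ^ ((t + 1) / 2)).choose t < 2 ^ (t.choose 2) := by
  rcases Nat.lt_or_ge t 6 with h | h
  · interval_cases t <;> norm_num [Nat.choose]
  · set q := (t + 1) / 2 with hq
    set m := 2 ^ q with hm
    have hfact := two_pow_lt_fact t h
    have h1 : m.choose t * t.factorial ≤ m ^ t := by
      rw [mul_comm, ← Nat.descFactorial_eq_factorial_mul_choose]
      exact Nat.descFactorial_le_pow m t
    have h2q : 2 * q ≤ t + 1 := by omega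
    have hT2 : 2 * t.choose 2 = t * (t - 1) := by
      rw [Nat.choose_two_right]
      have : 2 ∣ t * (t - 1) := Nat.even_mul_pred_self t |>.two_dvd
      omega
    have hqt : q * t ≤ t.choose 2 + t := by
      have h3 : 2 * (q * t) ≤ (t + 1) * t := by
        calc 2 * (q * t) = (2 * q) * t := by ring
          _ ≤ (t + 1) * t := Nat.mul_le_mul_right t h2q
      nlinarith [hT2, Nat.sub_add_cancel (by omega : 1 ≤ t)]
    have hmt : m ^ t = 2 ^ (q * t) := by rw [hm, ← pow_mul]
    -- 2 * choose * t! ≤ 2 * m^t = 2^(q*t+1) ≤ 2^(T + t + 1) < 2^T * t!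
    have key : 2 * m.choose t * t.factorial < 2 ^ (t.choose 2) * t.factorial := by
      calc 2 * m.choose t * t.factorial = 2 * (m.choose t * t.factorial) := by ring
        _ ≤ 2 * m ^ t := by omega
        _ = 2 ^ (q * t + 1) := by rw [hmt, pow_succ]; ring
        _ ≤ 2 ^ (t.choose 2 + t + 1) := Nat.pow_le_pow_right (by omega) (by omega)
        _ = 2 ^ (t.choose 2) * 2 ^ (t + 1) := by rw [← pow_add]; ring_nf
        _ < 2 ^ (t.choose 2) * t.factorial :=
            (Nat.mul_lt_mul_left (by positivity)).2 hfact
    exact Nat.lt_of_mul_lt_mul_right key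

lemma exists_two_coloring (t : ℕ) (ht : 3 ≤ t) :
    ∃ m : ℕ, (2:ℝ) ^ ((t:ℝ)/2) ≤ (m:ℝ) ∧
      ∃ f : Sym2 (Fin m) → Fin 2,
        ∀ S : Finset (Fin m), S.card = t → ¬ IsMonochromatic f S := by
  rcases Nat.lt_or_ge t 4 with h4 | h4
  · have ht3 : t = 3 := by omega
    subst ht3
    refine ⟨3, ?_, ?_⟩
    · have h0 : (0:ℝ) ≤ (2:ℝ) ^ ((3:ℝ)/2) := le_of_lt (Real.rpow_pos_of_pos (by norm_num) _)
      have hsq : ((2:ℝ) ^ ((3:ℝ)/2)) ^ 2 = 8 := by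
        rw [← Real.rpow_natCast ((2:ℝ) ^ ((3:ℝ)/2)) 2, ← Real.rpow_mul (by norm_num)]
        rw [show ((3:ℝ)/2) * ((2:ℕ):ℝ) = 3 by push_cast; ring]
        norm_num
      have : ((2:ℝ) ^ ((3:ℝ)/2)) ^ 2 ≤ (3:ℝ) ^ 2 := by rw [hsq]; norm_num
      push_cast
      exact le_of_pow_le_pow_left₀ (by norm_num) (by norm_num) this
    · refine ⟨fun e => if e = s((0 : Fin 3), 1) then 0 else 1, ?_⟩
      decide
  · refine ⟨2 ^ ((t + 1) / 2), ?_, ?_⟩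
    · have h2q : (t:ℝ)/2 ≤ (((t+1)/2 : ℕ) : ℝ) := by
        have : t ≤ 2 * ((t+1)/2) := by omega
        have := (Nat.cast_le (α := ℝ)).2 this
        push_cast at this
        linarith
      calc (2:ℝ) ^ ((t:ℝ)/2) ≤ (2:ℝ) ^ ((((t+1)/2 : ℕ)):ℝ) :=
            Real.rpow_le_rpow_of_exponent_le (by norm_num) h2q
        _ = ((2 ^ ((t+1)/2) : ℕ) : ℝ) := by
            rw [Real.rpow_natCast]; push_cast; ring
    · exact counting _ t (by omega) (choose_bound t h4)

open Finset Function

section Product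

variable {q m : ℕ}

/-- The largest coordinate where `u` and `v` differ. -/
def lastDiff (u v : Fin q → Fin m) (h : u ≠ v) : Fin q :=
  (univ.filter fun j => u j ≠ v j).max' (by
    rw [Function.ne_iff] at h
    obtain ⟨j, hj⟩ := h
    exact ⟨j, by simp [hj]⟩)

lemma lastDiff_ne (u v : Fin q → Fin m) (h : u ≠ v) :
    u (lastDiff u v h) ≠ v (lastDiff u v h) := by
  have h2 : lastDiff u v h ∈ univ.filter fun j => u j ≠ v j := by
    unfold lastDiff; exact Finset.max'_mem _ _
  rw [mem_filter] at h2
  exact h2.2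

lemma lastDiff_gt (u v : Fin q → Fin m) (h : u ≠ v) (l : Fin q)
    (hl : lastDiff u v h < l) : u l = v l := by
  by_contra hne
  have hmem : l ∈ univ.filter fun j => u j ≠ v j := by simp [hne]
  have : l ≤ lastDiff u v h := by
    unfold lastDiff; exact Finset.le_max' _ l hmem
  exact absurd this (not_le.2 hl)

lemma lastDiff_symm (u v : Fin q → Fin m) (h : u ≠ v) :
    lastDiff u v h = lastDiff v u (Ne.symm h) := by
  have hset : (univ.filter fun j => u j ≠ v j) = (univ.filter fun j => v j ≠ u j) := by
    ext j; simp [ne_comm]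
  unfold lastDiff
  exact le_antisymm
    (Finset.max'_le _ _ _ fun y hy => Finset.le_max' _ y (hset ▸ hy))
    (Finset.max'_le _ _ _ fun y hy => Finset.le_max' _ y (hset ▸ hy))

variable (f : Sym2 (Fin m) → Fin 2) {k : ℕ} (hk : k = 2 * q) (hq : 0 < q)

/-- The product (lexicographic / Gallai) coloring. -/
def prodColor : Sym2 (Fin q → Fin m) → Fin k :=
  Sym2.lift ⟨fun u v =>
    if h : u = v then ⟨0, by omega⟩
    else Fin.cast (by omega : q * 2 = k)
      (finProdFinEquiv (lastDiff u v h, f s(u (lastDiff u v h), v (lastDiff u v h)))),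
  by
    intro u v
    dsimp only
    rcases eq_or_ne u v with h | h
    · subst h; rfl
    · rw [dif_neg h, dif_neg (Ne.symm h)]
      have hld := lastDiff_symm u v h
      congr 1
      rw [← hld, Sym2.eq_swap]⟩

lemma prodColor_mk (u v : Fin q → Fin m) (h : u ≠ v) :
    prodColor f hk hq s(u, v) = Fin.cast (by omega : q * 2 = k)
      (finProdFinEquiv (lastDiff u v h, f s(u (lastDiff u v h), v (lastDiff u v h)))) := by
  simp only [prodColor, Sym2.lift_mk, dif_neg h]

lemma prodColor_inj {u v x y : Fin q → Fin m} (hu : u ≠ v) (hx : x ≠ y)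
    (h : prodColor f hk hq s(u, v) = prodColor f hk hq s(x, y)) :
    lastDiff u v hu = lastDiff x y hx ∧
      f s(u (lastDiff u v hu), v (lastDiff u v hu))
        = f s(x (lastDiff x y hx), y (lastDiff x y hx)) := by
  rw [prodColor_mk f hk hq u v hu, prodColor_mk f hk hq x y hx] at h
  have h1 : (finProdFinEquiv (lastDiff u v hu,
      f s(u (lastDiff u v hu), v (lastDiff u v hu))) : Fin (q * 2))
      = finProdFinEquiv (lastDiff x y hx, f s(x (lastDiff x y hx), y (lastDiff x y hx))) := by
    have hci : Function.Injective (Fin.cast (by omega : q * 2 = k)) :=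
      (finCongr (by omega : q * 2 = k)).injective
    exact hci h
  have h2 := finProdFinEquiv.injective h1
  exact ⟨congrArg Prod.fst h2, congrArg Prod.snd h2⟩

lemma prodColor_no_mono (t : ℕ) (ht : 3 ≤ t)
    (hf : ∀ S : Finset (Fin m), S.card = t → ¬ IsMonochromatic f S)
    (S : Finset (Fin q → Fin m)) (hS : S.card = t) :
    ¬ IsMonochromatic (prodColor f hk hq) S := by
  intro hmono
  obtain ⟨a₀, ha₀, b₀, hb₀, hab₀⟩ := Finset.one_lt_card.1 (by rw [hS]; omega : 1 < S.card)
  have hclaim : ∀ u ∈ S, ∀ v ∈ S, ∀ h : u ≠ v,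
      lastDiff u v h = lastDiff a₀ b₀ hab₀ ∧
        f s(u (lastDiff a₀ b₀ hab₀), v (lastDiff a₀ b₀ hab₀))
          = f s(a₀ (lastDiff a₀ b₀ hab₀), b₀ (lastDiff a₀ b₀ hab₀)) := by
    intro u hu v hv h
    have hcc := hmono u hu v hv a₀ ha₀ b₀ hb₀ h hab₀
    obtain ⟨h1, h2⟩ := prodColor_inj f hk hq h hab₀ hcc
    rw [h1] at h2
    exact ⟨h1, h2⟩
  set j₀ := lastDiff a₀ b₀ hab₀ with hj₀
  have hinj : Set.InjOn (fun u : Fin q → Fin m => u j₀) ↑S := by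
    intro u hu v hv huv
    by_contra h
    have h1 := (hclaim u hu v hv h).1
    have hne := lastDiff_ne u v h
    rw [h1] at hne
    exact hne huv
  have hcard : (S.image fun u => u j₀).card = t := by
    rw [Finset.card_image_of_injOn hinj, hS]
  apply hf _ hcard
  intro a' ha' b' hb' x' hx' y' hy' hab hxy
  simp only [Finset.mem_image] at ha' hb' hx' hy'
  obtain ⟨u, hu, rfl⟩ := ha'
  obtain ⟨v, hv, rfl⟩ := hb'
  obtain ⟨x, hx, rfl⟩ := hx'
  obtain ⟨y, hy, rfl⟩ := hy'
  have huv : u ≠ v := fun h => hab (by rw [h])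
  have hxy' : x ≠ y := fun h => hxy (by rw [h])
  rw [(hclaim u hu v hv huv).2, (hclaim x hx y hy hxy').2]

lemma lastDiff_max (u v w : Fin q → Fin m) (huv : u ≠ v) (hvw : v ≠ w) (huw : u ≠ w) :
    lastDiff u v huv ≤ max (lastDiff v w hvw) (lastDiff u w huw) := by
  by_contra hcon
  rw [not_le, max_lt_iff] at hcon
  have h1 : v (lastDiff u v huv) = w (lastDiff u v huv) :=
    lastDiff_gt v w hvw _ hcon.1
  have h2 : u (lastDiff u v huv) = w (lastDiff u v huv) :=
    lastDiff_gt u w huw _ hcon.2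
  exact lastDiff_ne u v huv (h2.trans h1.symm)

lemma prodColor_no_rainbow (S : Finset (Fin q → Fin m)) (hS : S.card = 3) :
    ¬ IsRainbow (prodColor f hk hq) S := by
  intro hrain
  obtain ⟨u, v, w, huv, huw, hvw, rfl⟩ := Finset.card_eq_three.1 hS
  have hu : u ∈ ({u, v, w} : Finset _) := by simp
  have hv : v ∈ ({u, v, w} : Finset _) := by simp
  have hw : w ∈ ({u, v, w} : Finset _) := by simp
  -- distinctness of the three edges
  have e12 : s(u, v) ≠ s(v, w) := by
    rw [Ne, Sym2.eq_iff]
    rintro (⟨h, h'⟩ | ⟨h, h'⟩)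
    exacts [huv h, huw h]
  have e13 : s(u, v) ≠ s(u, w) := by
    rw [Ne, Sym2.eq_iff]
    rintro (⟨h, h'⟩ | ⟨h, h'⟩)
    exacts [hvw h', huw h]
  have e23 : s(v, w) ≠ s(u, w) := by
    rw [Ne, Sym2.eq_iff]
    rintro (⟨h, h'⟩ | ⟨h, h'⟩)
    exacts [huv h.symm, hvw h]
  -- the three max-inequalities, on values
  have m1' : (lastDiff u v huv).val ≤ (lastDiff v w hvw).val ∨
      (lastDiff u v huv).val ≤ (lastDiff u w huw).val := by
    rcases le_max_iff.1 (lastDiff_max u v w huv hvw huw) with h | h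
    · exact Or.inl (Fin.le_def.1 h)
    · exact Or.inr (Fin.le_def.1 h)
  have m2' : (lastDiff v w hvw).val ≤ (lastDiff u v huv).val ∨
      (lastDiff v w hvw).val ≤ (lastDiff u w huw).val := by
    have hmax := lastDiff_max v w u hvw (Ne.symm huw) (Ne.symm huv)
    rw [← lastDiff_symm u w huw, ← lastDiff_symm u v huv] at hmax
    rcases le_max_iff.1 hmax with h | h
    · exact Or.inr (Fin.le_def.1 h)
    · exact Or.inl (Fin.le_def.1 h)
  have m3' : (lastDiff u w huw).val ≤ (lastDiff u v huv).val ∨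
      (lastDiff u w huw).val ≤ (lastDiff v w hvw).val := by
    have hmax := lastDiff_max u w v huw (Ne.symm hvw) huv
    rw [← lastDiff_symm v w hvw] at hmax
    rcases le_max_iff.1 hmax with h | h
    · exact Or.inr (Fin.le_def.1 h)
    · exact Or.inl (Fin.le_def.1 h)
  have hcases :
      ((lastDiff u v huv).val = (lastDiff v w hvw).val ∧
        (lastDiff u w huw).val < (lastDiff u v huv).val) ∨
      ((lastDiff u v huv).val = (lastDiff u w huw).val ∧
        (lastDiff v w hvw).val < (lastDiff u v huv).val) ∨
      ((lastDiff v w hvw).val = (lastDiff u w huw).val ∧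
        (lastDiff u v huv).val < (lastDiff v w hvw).val) ∨
      ((lastDiff u v huv).val = (lastDiff v w hvw).val ∧
        (lastDiff v w hvw).val = (lastDiff u w huw).val) := by omega
  rcases hcases with ⟨h1, h2⟩ | ⟨h1, h2⟩ | ⟨h1, h2⟩ | ⟨h1, h2⟩
  · -- j1 = j2 > j3 : edges uv and vw share color
    have hj : lastDiff u v huv = lastDiff v w hvw := Fin.val_injective h1
    have hlt : lastDiff u w huw < lastDiff u v huv := Fin.lt_def.2 h2
    have huw1 : u (lastDiff u v huv) = w (lastDiff u v huv) :=
      lastDiff_gt u w huw _ hlt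
    apply hrain u hu v hv v hv w hw huv hvw e12
    rw [prodColor_mk f hk hq u v huv, prodColor_mk f hk hq v w hvw, ← hj]
    congr 2
    rw [huw1, Sym2.eq_swap]
  · -- j1 = j3 > j2 : edges uv and uw share color
    have hj : lastDiff u v huv = lastDiff u w huw := Fin.val_injective h1
    have hlt : lastDiff v w hvw < lastDiff u v huv := Fin.lt_def.2 h2
    have hvw1 : v (lastDiff u v huv) = w (lastDiff u v huv) :=
      lastDiff_gt v w hvw _ hlt
    apply hrain u hu v hv u hu w hw huv huw e13
    rw [prodColor_mk f hk hq u v huv, prodColor_mk f hk hq u w huw, ← hj]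
    congr 2
    rw [hvw1]
  · -- j2 = j3 > j1 : edges vw and uw share color
    have hj : lastDiff v w hvw = lastDiff u w huw := Fin.val_injective h1
    have hlt : lastDiff u v huv < lastDiff v w hvw := Fin.lt_def.2 h2
    have huv1 : u (lastDiff v w hvw) = v (lastDiff v w hvw) :=
      lastDiff_gt u v huv _ hlt
    apply hrain v hv w hw u hu w hw hvw huw e23
    rw [prodColor_mk f hk hq v w hvw, prodColor_mk f hk hq u w huw, ← hj]
    congr 2
    rw [huv1]
  · -- all equal : three colors in a 2-element fiber, pigeonhole
    have hj2 : lastDiff v w hvw = lastDiff u v huv := (Fin.val_injective h1).symm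
    have hj3 : lastDiff u w huw = lastDiff u v huv :=
      (Fin.val_injective (h1.trans h2)).symm
    set j := lastDiff u v huv with hjdef
    have hpig : ∀ a b c : Fin 2, a = b ∨ a = c ∨ b = c := by decide
    rcases hpig (f s(u j, v j)) (f s(v j, w j)) (f s(u j, w j)) with hb | hb | hb
    · apply hrain u hu v hv v hv w hw huv hvw e12
      rw [prodColor_mk f hk hq u v huv, prodColor_mk f hk hq v w hvw, hj2, ← hjdef, hb]
    · apply hrain u hu v hv u hu w hw huv huw e13
      rw [prodColor_mk f hk hq u v huv, prodColor_mk f hk hq u w huw, hj3, ← hjdef, hb]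
    · apply hrain v hv w hw u hu w hw hvw huw e23
      rw [prodColor_mk f hk hq v w hvw, prodColor_mk f hk hq u w huw, hj2, hj3, hb]

end Product

open Finset Function

lemma transport_mono {V W C : Type*} [DecidableEq V] [DecidableEq W]
    (E : V ≃ W) (c' : Sym2 W → C) (S : Finset V)
    (h : IsMonochromatic (fun e => c' (Sym2.map E e)) S) :
    IsMonochromatic c' (S.image E) := by
  intro a' ha' b' hb' x' hx' y' hy' hab hxy
  simp only [Finset.mem_image] at ha' hb' hx' hy'
  obtain ⟨a, ha, rfl⟩ := ha'
  obtain ⟨b, hb, rfl⟩ := hb'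
  obtain ⟨x, hx, rfl⟩ := hx'
  obtain ⟨y, hy, rfl⟩ := hy'
  have := h a ha b hb x hx y hy (fun hh => hab (by rw [hh])) (fun hh => hxy (by rw [hh]))
  simpa only [Sym2.map_pair_eq] using this

lemma transport_rainbow {V W C : Type*} [DecidableEq V] [DecidableEq W]
    (E : V ≃ W) (c' : Sym2 W → C) (S : Finset V)
    (h : IsRainbow (fun e => c' (Sym2.map E e)) S) :
    IsRainbow c' (S.image E) := by
  intro a' ha' b' hb' x' hx' y' hy' hab hxy hne
  simp only [Finset.mem_image] at ha' hb' hx' hy'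
  obtain ⟨a, ha, rfl⟩ := ha'
  obtain ⟨b, hb, rfl⟩ := hb'
  obtain ⟨x, hx, rfl⟩ := hx'
  obtain ⟨y, hy, rfl⟩ := hy'
  have hne' : s(a, b) ≠ s(x, y) := by
    intro hh
    apply hne
    rw [← Sym2.map_pair_eq E, ← Sym2.map_pair_eq E, hh]
  have := h a ha b hb x hx y hy (fun hh => hab (by rw [hh])) (fun hh => hxy (by rw [hh])) hne'
  simpa only [Sym2.map_pair_eq] using this

theorem M_lower_bound'
    (k t : ℕ) (hk : 0 < k) (hke : Even k) (ht : 3 ≤ t) :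
    ∃ n : ℕ, (2 : ℝ) ^ ((k * t : ℝ) / 4) ≤ (n : ℝ) ∧
      ∃ c : Sym2 (Fin n) → Fin k,
        (∀ S : Finset (Fin n), S.card = t → ¬ IsMonochromatic c S) ∧
        (∀ S : Finset (Fin n), S.card = 3 → ¬ IsRainbow c S) := by
  classical
  obtain ⟨q, hq2⟩ := hke
  have hkq : k = 2 * q := by omega
  have hq : 0 < q := by omega
  obtain ⟨m, hm, f, hf⟩ := exists_two_coloring t ht
  refine ⟨m ^ q, ?_, ?_⟩
  · -- numeric bound
    have h1 : (k * t : ℝ) / 4 = ((t : ℝ) / 2) * (q : ℕ) := by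
      rw [hkq]; push_cast; ring
    rw [h1, Real.rpow_mul (by norm_num), Real.rpow_natCast]
    push_cast
    exact pow_le_pow_left₀ (le_of_lt (Real.rpow_pos_of_pos (by norm_num) _)) hm q
  · -- the coloring
    have hcard : m ^ q = Fintype.card (Fin q → Fin m) := by
      simp [Fintype.card_fun]
    set E : Fin (m ^ q) ≃ (Fin q → Fin m) := finFunctionFinEquiv.symm with hE
    refine ⟨fun e => prodColor f hkq hq (Sym2.map E e), ?_, ?_⟩
    · intro S hS hmono
      apply prodColor_no_mono f hkq hq t ht hf (S.image E)
      · rw [Finset.card_image_of_injective _ E.injective, hS]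
      · exact transport_mono E _ S hmono
    · intro S hS hrain
      apply prodColor_no_rainbow f hkq hq (S.image E)
      · rw [Finset.card_image_of_injective _ E.injective, hS]
      · exact transport_rainbow E _ S hrain


/-- **Lemma 9.** For positive integers `k, t` with `k` even and `t ≥ 3`,
`M(k,t,3) > 2^(kt/4)`: there is a `k`-edge-coloring of a complete graph on at least
`2^(kt/4)` vertices with no monochromatic `K_t` and no rainbow triangle. -/
theorem M_lower_bound
    (k t : ℕ) (hk : 0 < k) (hke : Even k) (ht : 3 ≤ t) :
    ∃ n : ℕ, (2 : ℝ) ^ ((k * t : ℝ) / 4) ≤ (n : ℝ) ∧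
      ∃ c : Sym2 (Fin n) → Fin k,
        (∀ S : Finset (Fin n), S.card = t → ¬ IsMonochromatic c S) ∧
        (∀ S : Finset (Fin n), S.card = 3 → ¬ IsRainbow c S) := by
  exact M_lower_bound' k t hk hke ht
end
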